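/- arXiv:2111.10324 — 8 statements merged into one kernel-verified Lean document; each statement's English description precedes it below -/
import Mathlib

section
/- Let p be an odd prime, 0 ≤ e₂ ≤ e₃ integers, ε₁, ε₂, ε₃ ∈ ℤ_p^×, and suppose the ternary ℤ_p-lattice M = ⟨ε₁, p^{e₂}ε₂, p^{e₃}ε₃⟩ is isotropic. If -p^{e₂}ε₁ε₂ is a square in ℚ_p^×, then for any ℤ_p-lattice L of rank ≥ 4 containing M as an orthogonal summand with the remaining diagonal entries of p-order at least e₃, one has ν'_p(L) = ν_p(L) = e₂ + 1. -/
open PadicInt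

section aux
variable {p : ℕ} [hp : Fact p.Prime]

lemma aux_not_isUnit_p : ¬ IsUnit (p : ℤ_[p]) :=
  fun h => mem_nonunits_iff.mp PadicInt.p_nonunit h

lemma aux_p_not_dvd_unit {z : ℤ_[p]} (hz : IsUnit z) : ¬ (p:ℤ_[p]) ∣ z :=
  fun h => aux_not_isUnit_p (isUnit_of_dvd_unit h hz)

lemma aux_p_ne_zero : (p : ℤ_[p]) ≠ 0 :=
  Nat.cast_ne_zero.mpr hp.out.ne_zero

lemma aux_dvd_of_pow_succ {n : ℕ} {z : ℤ_[p]}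
    (h : (p:ℤ_[p])^(n+1) ∣ (p:ℤ_[p])^n * z) : (p:ℤ_[p]) ∣ z := by
  rw [pow_succ] at h
  exact (mul_dvd_mul_iff_left (pow_ne_zero n aux_p_ne_zero)).mp h

lemma aux_val_unit_zero {z : ℤ_[p]} (hz : IsUnit z) : z.valuation = 0 := by
  have h0 : z ≠ 0 := hz.ne_zero
  have h1 : ‖z‖ = 1 := PadicInt.isUnit_iff.mp hz
  have h2 := PadicInt.norm_eq_zpow_neg_valuation h0
  rw [h1] at h2
  have hp1 : (1:ℝ) < p := by exact_mod_cast hp.out.one_lt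
  have h3 : (p:ℝ) ^ (-(z.valuation:ℤ)) = (p:ℝ) ^ (0:ℤ) := by rw [← h2]; norm_num
  have h4 := (zpow_right_inj₀ (by positivity) (ne_of_gt hp1)).mp h3
  omega

lemma aux_two_unit (hp2 : p ≠ 2) : IsUnit (2 : ℤ_[p]) := by
  rw [PadicInt.isUnit_iff]
  refine le_antisymm (PadicInt.norm_le_one _) ?_
  by_contra hlt
  push_neg at hlt
  have h2 : ((2:ℤ) : ℤ_[p]) = (2 : ℤ_[p]) := by norm_cast
  have : ((p:ℤ)) ∣ 2 := (PadicInt.norm_int_lt_one_iff_dvd 2).mp (by rw [h2]; exact hlt)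
  have hpd : p ∣ 2 := by exact_mod_cast this
  exact hp2 ((Nat.prime_dvd_prime_iff_eq hp.out Nat.prime_two).mp hpd)

lemma aux_sq (e₂ : ℕ) (ε₁ ε₂ : ℤ_[p]ˣ)
    (hsq : ∃ γ : ℚ_[p], γ ≠ 0 ∧
      -((p : ℚ_[p]) ^ e₂ * ((ε₁ : ℤ_[p]) : ℚ_[p]) * ((ε₂ : ℤ_[p]) : ℚ_[p])) = γ ^ 2) :
    ∃ (m : ℕ) (δ : ℤ_[p]ˣ), e₂ = 2 * m ∧
      (δ : ℤ_[p])^2 = -((ε₁ : ℤ_[p]) * (ε₂ : ℤ_[p])) := by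
  obtain ⟨γ, hγ0, hγ⟩ := hsq
  have hp1 : (1:ℝ) < p := by exact_mod_cast hp.out.one_lt
  have hpQ : (p : ℚ_[p]) ≠ 0 := Nat.cast_ne_zero.mpr hp.out.ne_zero
  have hn1 : ‖((ε₁ : ℤ_[p]) : ℚ_[p])‖ = 1 := by
    rw [← PadicInt.norm_def]; exact PadicInt.norm_units ε₁
  have hn2 : ‖((ε₂ : ℤ_[p]) : ℚ_[p])‖ = 1 := by
    rw [← PadicInt.norm_def]; exact PadicInt.norm_units ε₂
  have hnγ : ‖γ‖^2 = (p:ℝ) ^ (-(e₂:ℤ)) := by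
    have : ‖γ^2‖ = ‖-((p : ℚ_[p]) ^ e₂ * ((ε₁ : ℤ_[p]) : ℚ_[p]) * ((ε₂ : ℤ_[p]) : ℚ_[p]))‖ := by
      rw [hγ]
    rw [norm_neg, _root_.norm_mul, _root_.norm_mul, hn1, hn2, _root_.norm_pow] at this
    rw [this, mul_one, mul_one, Padic.norm_p_pow]
  have hval : ‖γ‖ = (p:ℝ) ^ (-γ.valuation) := Padic.norm_eq_zpow_neg_valuation hγ0
  have hv2 : (p:ℝ) ^ (-γ.valuation * 2) = (p:ℝ) ^ (-(e₂:ℤ)) := by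
    rw [zpow_mul]
    rw [← hnγ, hval]
    norm_cast
  have hv3 : -γ.valuation * 2 = -(e₂:ℤ) :=
    (zpow_right_inj₀ (by positivity) (ne_of_gt hp1)).mp hv2
  have hme : e₂ = 2 * (e₂ / 2) := by omega
  set m := e₂ / 2 with hmdef
  have hvm : γ.valuation = (m:ℤ) := by omega
  have hnorm1 : ‖γ / (p:ℚ_[p])^m‖ = 1 := by
    rw [norm_div, hval, hvm, Padic.norm_p_pow, div_self]
    exact zpow_ne_zero _ (by positivity)
  refine ⟨m, PadicInt.mkUnits hnorm1, hme, ?_⟩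
  apply Subtype.coe_injective
  push_cast
  rw [PadicInt.mkUnits_eq]
  rw [div_pow, div_eq_iff (pow_ne_zero 2 (pow_ne_zero m hpQ))]
  have hpm : ((p:ℚ_[p])^m)^2 = (p:ℚ_[p])^e₂ := by
    rw [← pow_mul]
    congr 1
    omega
  rw [hpm]
  linear_combination -hγ

end aux

/-- `nuS p QS s` is `ord_p(s·p^{2u})` for the least `u ≥ 0` with `s·p^{2u} ∈ QS`
(`⊤` if no such `u` exists). -/
noncomputable def nuS (p : ℕ) [Fact p.Prime] (QS : Set ℤ_[p]) (s : ℤ_[p]) : ℕ∞ :=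
  sInf {m : ℕ∞ | ∃ u : ℕ, m = ((s.valuation + 2 * u : ℕ) : ℕ∞) ∧
    s * (p : ℤ_[p]) ^ (2 * u) ∈ QS}

/-- The maximum of `nuS p QS s` over `s ∈ SC`. -/
noncomputable def nuMax (p : ℕ) [Fact p.Prime] (QS SC : Set ℤ_[p]) : ℕ∞ :=
  sSup (nuS p QS '' SC)

/-- The set `SC_p` of square-class representatives: `{1,3,5,7,2,6,10,14}` for `p = 2`,
and `{1, Δ, p, pΔ}` for odd `p`, where `Δ` is a (chosen) nonsquare unit. -/
def SCgen (p : ℕ) [Fact p.Prime] (Δ : ℤ_[p]) : Set ℤ_[p] :=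
  if p = 2 then {1, 3, 5, 7, 2, 6, 10, 14} else {1, Δ, (p : ℤ_[p]), (p : ℤ_[p]) * Δ}

/-- For an odd prime `p`, if `M = ⟨ε₁, p^{e₂}ε₂, p^{e₃}ε₃⟩` is isotropic and
`-p^{e₂}ε₁ε₂` is a square in `ℚ_p^×`, then for any lattice `L` of rank `k ≥ 4`
containing `M` as an orthogonal summand whose remaining diagonal entries have
`p`-order at least `e₃`, one has `ν'_p(L) = ν_p(L) = e₂ + 1`. -/
theorem stmt_6 (p : ℕ) [Fact p.Prime] (hp : p ≠ 2)
    (Δ : ℤ_[p]) (hΔ : IsUnit Δ ∧ ¬IsSquare Δ)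
    (e₂ e₃ : ℕ) (he : e₂ ≤ e₃) (ε₁ ε₂ ε₃ : ℤ_[p]ˣ)
    (hiso : ∃ v : Fin 3 → ℚ_[p], v ≠ 0 ∧
      ((ε₁ : ℤ_[p]) : ℚ_[p]) * v 0 ^ 2 +
        (p : ℚ_[p]) ^ e₂ * ((ε₂ : ℤ_[p]) : ℚ_[p]) * v 1 ^ 2 +
        (p : ℚ_[p]) ^ e₃ * ((ε₃ : ℤ_[p]) : ℚ_[p]) * v 2 ^ 2 = 0)
    (hsq : ∃ γ : ℚ_[p], γ ≠ 0 ∧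
      -((p : ℚ_[p]) ^ e₂ * ((ε₁ : ℤ_[p]) : ℚ_[p]) * ((ε₂ : ℤ_[p]) : ℚ_[p])) = γ ^ 2)
    (k : ℕ) (hk : 4 ≤ k) (d : ℕ → ℤ_[p])
    (hd0 : d 0 = (ε₁ : ℤ_[p])) (hd1 : d 1 = (p : ℤ_[p]) ^ e₂ * (ε₂ : ℤ_[p]))
    (hd2 : d 2 = (p : ℤ_[p]) ^ e₃ * (ε₃ : ℤ_[p]))
    (hdrest : ∀ i, 3 ≤ i → i < k → ∃ (η : ℤ_[p]ˣ) (f : ℕ),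
      e₃ ≤ f ∧ d i = (p : ℤ_[p]) ^ f * (η : ℤ_[p])) :
    nuMax p {c | ∃ x : ℕ → ℤ_[p], (∑ i ∈ Finset.range k, d i * (x i) ^ 2) = c}
        (SCgen p Δ) = ((e₂ + 1 : ℕ) : ℕ∞) ∧
      ∀ s₀ ∈ SCgen p Δ,
        nuS p {c | ∃ x : ℕ → ℤ_[p], (∑ i ∈ Finset.range k, d i * (x i) ^ 2) = c} s₀ =
          nuMax p {c | ∃ x : ℕ → ℤ_[p], (∑ i ∈ Finset.range k, d i * (x i) ^ 2) = c}
            (SCgen p Δ) →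
        nuMax p {c | ∃ x : ℕ → ℤ_[p], (∑ i ∈ Finset.range k, d i * (x i) ^ 2) = c}
            (SCgen p Δ \ {s₀}) = ((e₂ + 1 : ℕ) : ℕ∞) := by
  classical
  set Q : Set ℤ_[p] := {c | ∃ x : ℕ → ℤ_[p], (∑ i ∈ Finset.range k, d i * (x i) ^ 2) = c}
    with hQdef
  obtain ⟨m, δ, hm, hδsq⟩ := aux_sq e₂ ε₁ ε₂ hsq
  obtain ⟨t, ht⟩ := (aux_two_unit hp).exists_right_inv
  obtain ⟨e1i, he1i⟩ : ∃ z, (ε₁:ℤ_[p]) * z = 1 := ε₁.isUnit.exists_right_inv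
  obtain ⟨di, hdi⟩ : ∃ z, (δ:ℤ_[p]) * z = 1 := δ.isUnit.exists_right_inv
  -- everything divisible by p^e₂ is represented
  have hpos : ∀ c : ℤ_[p], (p:ℤ_[p])^e₂ ∣ c → c ∈ Q := by
    rintro c ⟨w, rfl⟩
    refine ⟨fun i => if i = 0 then (p:ℤ_[p])^m*(t*(1+w*e1i))
      else if i = 1 then t*(w*e1i-1)*(ε₁:ℤ_[p])*di else 0, ?_⟩
    rw [Finset.range_eq_Ico, Finset.sum_eq_sum_Ico_succ_bot (by omega : 0 < k),
      Finset.sum_eq_sum_Ico_succ_bot (by omega : 1 < k)]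
    rw [Finset.sum_eq_zero (fun i hi => by
      rw [Finset.mem_Ico] at hi
      have h0 : i ≠ 0 := by omega
      have h1 : i ≠ 1 := by omega
      simp [h0, h1])]
    show d 0 * ((p:ℤ_[p])^m*(t*(1+w*e1i)))^2
      + (d 1 * (t*(w*e1i-1)*(ε₁:ℤ_[p])*di)^2 + 0) = (p:ℤ_[p])^e₂ * w
    rw [hd0, hd1, add_zero]
    have hq2 : (p:ℤ_[p])^e₂ = ((p:ℤ_[p])^m)^2 := by
      rw [← pow_mul]; congr 1; omega
    rw [hq2]
    linear_combination ((((p:ℤ_[p])^m)^2)*w*(2*t+1)) * ht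
      + (4*(((p:ℤ_[p])^m)^2)*t^2*w) * he1i
      - ((((p:ℤ_[p])^m)^2)*t^2*(w*e1i-1)^2*(ε₁:ℤ_[p])*((δ:ℤ_[p])*di+1)) * hdi
      + ((((p:ℤ_[p])^m)^2)*t^2*(w*e1i-1)^2*(ε₁:ℤ_[p])*di^2) * hδsq
  -- elements of odd order < e₂ are not represented
  have hneg : ∀ (u : ℕ) (η : ℤ_[p]), IsUnit η → 2*u+1 < e₂ →
      ((p:ℤ_[p])^(2*u+1) * η ∉ Q) := by
    rintro u η hη hlt ⟨x, hx⟩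
    rw [Finset.range_eq_Ico, Finset.sum_eq_sum_Ico_succ_bot (by omega : 0 < k)] at hx
    have hdvd : (p:ℤ_[p])^e₂ ∣ ∑ i ∈ Finset.Ico 1 k, d i * x i^2 := by
      refine Finset.dvd_sum (fun i hi => ?_)
      rw [Finset.mem_Ico] at hi
      have hdi' : (p:ℤ_[p])^e₂ ∣ d i := by
        rcases Nat.lt_or_ge i 2 with h2 | h2
        · have : i = 1 := by omega
          rw [this, hd1]; exact dvd_mul_right _ _
        rcases Nat.lt_or_ge i 3 with h3 | h3
        · have : i = 2 := by omega
          rw [this, hd2]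
          exact dvd_mul_of_dvd_left (pow_dvd_pow _ he) _
        · obtain ⟨η', f, hf, hdf⟩ := hdrest i h3 hi.2
          rw [hdf]
          exact dvd_mul_of_dvd_left (pow_dvd_pow _ (le_trans he hf)) _
      exact hdi'.mul_right _
    obtain ⟨r, hr⟩ := hdvd
    rw [hr, hd0] at hx
    -- hx : ↑ε₁ * x 0 ^ 2 + p^e₂ * r = p^(2u+1) * η
    by_cases hx0 : x 0 = 0
    · rw [hx0] at hx
      have hx' : (p:ℤ_[p])^e₂ * r = (p:ℤ_[p])^(2*u+1) * η := by
        rw [← hx]; ring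
      have hdd : (p:ℤ_[p])^(2*u+1+1) ∣ (p:ℤ_[p])^(2*u+1) * η := by
        rw [← hx']
        exact dvd_mul_of_dvd_left (pow_dvd_pow _ (by omega)) r
      exact aux_p_not_dvd_unit hη (aux_dvd_of_pow_succ hdd)
    · set ξ := PadicInt.unitCoeff hx0 with hξdef
      set n := (x 0).valuation with hndef
      have hxspec : x 0 = (ξ:ℤ_[p]) * (p:ℤ_[p])^n := PadicInt.unitCoeff_spec hx0
      by_cases hn : u + 1 ≤ n
      · have h1 : (p:ℤ_[p])^(2*u+1+1) ∣ (ε₁:ℤ_[p]) * x 0^2 := by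
          have hx2 : (ε₁:ℤ_[p]) * x 0^2 = (p:ℤ_[p])^(2*n) * ((ε₁:ℤ_[p])*(ξ:ℤ_[p])^2) := by
            rw [hxspec]; ring
          rw [hx2]
          exact dvd_mul_of_dvd_left (pow_dvd_pow _ (by omega)) _
        have h2 : (p:ℤ_[p])^(2*u+1+1) ∣ (p:ℤ_[p])^e₂ * r :=
          dvd_mul_of_dvd_left (pow_dvd_pow _ (by omega)) r
        have h3 := dvd_add h1 h2
        rw [hx] at h3
        exact aux_p_not_dvd_unit hη (aux_dvd_of_pow_succ h3)
      · have h1 : (p:ℤ_[p])^(2*n+1) ∣ (p:ℤ_[p])^(2*u+1) * η :=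
          dvd_mul_of_dvd_left (pow_dvd_pow _ (by omega)) η
        have h2 : (p:ℤ_[p])^(2*n+1) ∣ (p:ℤ_[p])^e₂ * r :=
          dvd_mul_of_dvd_left (pow_dvd_pow _ (by omega)) r
        have h3 : (p:ℤ_[p])^(2*n+1) ∣ (ε₁:ℤ_[p]) * x 0^2 := by
          have heq : (ε₁:ℤ_[p]) * x 0^2 = (p:ℤ_[p])^(2*u+1) * η - (p:ℤ_[p])^e₂ * r := by
            rw [← hx]; ring
          rw [heq]
          exact dvd_sub h1 h2
        have hx2 : (ε₁:ℤ_[p]) * x 0^2 = (p:ℤ_[p])^(2*n) * ((ε₁:ℤ_[p])*(ξ:ℤ_[p])^2) := by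
          rw [hxspec]; ring
        rw [hx2] at h3
        exact aux_p_not_dvd_unit (ε₁.isUnit.mul (ξ.isUnit.pow 2))
          (aux_dvd_of_pow_succ h3)
  -- valuations
  have hΔ0 : Δ ≠ 0 := hΔ.1.ne_zero
  have hval1 : (1:ℤ_[p]).valuation = 0 := by
    rw [PadicInt.valuation_one]
  have hvalΔ : Δ.valuation = 0 := by
    rw [aux_val_unit_zero hΔ.1]
  have hvalp : ((p:ℤ_[p])).valuation = 1 := by
    rw [PadicInt.valuation_p]
  have hvalpΔ : ((p:ℤ_[p])*Δ).valuation = 1 := by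
    have h1 : ((p:ℤ_[p])^1 * Δ).valuation = 1 + Δ.valuation :=
      PadicInt.valuation_p_pow_mul 1 Δ hΔ0
    rw [pow_one] at h1
    rw [h1, aux_val_unit_zero hΔ.1]
  -- upper bound for units
  have hub : ∀ s : ℤ_[p], s.valuation = 0 → nuS p Q s ≤ ((e₂:ℕ):ℕ∞) := by
    intro s hs
    apply sInf_le
    refine ⟨m, ?_, hpos _ ⟨s, by rw [hm]; ring⟩⟩
    rw [hs]
    norm_cast
    omega
  -- exact values for p and pΔ
  have hple : ∀ (s η : ℤ_[p]), IsUnit η → s = (p:ℤ_[p]) * η → s.valuation = 1 →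
      nuS p Q s = ((e₂+1:ℕ):ℕ∞) := by
    rintro s η hη rfl hv
    apply le_antisymm
    · apply sInf_le
      refine ⟨m, ?_, hpos _ ⟨(p:ℤ_[p])*η, by rw [hm]; ring⟩⟩
      rw [hv]
      norm_cast
      omega
    · apply le_sInf
      rintro b ⟨u, rfl, hbQ⟩
      rw [hv]
      rw [Nat.cast_le]
      by_contra hcon
      push_neg at hcon
      have hlt : 2*u+1 < e₂ := by omega
      have heq : (p:ℤ_[p]) * η * (p:ℤ_[p])^(2*u) = (p:ℤ_[p])^(2*u+1) * η := by ring
      exact hneg u η hη hlt (heq ▸ hbQ)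
  have hpeq : nuS p Q (p:ℤ_[p]) = ((e₂+1:ℕ):ℕ∞) :=
    hple (p:ℤ_[p]) 1 isUnit_one (by ring) hvalp
  have hpΔeq : nuS p Q ((p:ℤ_[p])*Δ) = ((e₂+1:ℕ):ℕ∞) :=
    hple ((p:ℤ_[p])*Δ) Δ hΔ.1 rfl hvalpΔ
  have hSC : SCgen p Δ = {1, Δ, (p : ℤ_[p]), (p : ℤ_[p]) * Δ} := if_neg hp
  have hee : ((e₂:ℕ):ℕ∞) ≤ ((e₂+1:ℕ):ℕ∞) := by
    rw [Nat.cast_le]; omega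
  have hallub : ∀ s ∈ ({1, Δ, (p : ℤ_[p]), (p : ℤ_[p]) * Δ} : Set ℤ_[p]),
      nuS p Q s ≤ ((e₂+1:ℕ):ℕ∞) := by
    intro s hs
    simp only [Set.mem_insert_iff, Set.mem_singleton_iff] at hs
    rcases hs with rfl | rfl | rfl | rfl
    · exact le_trans (hub _ hval1) hee
    · exact le_trans (hub _ hvalΔ) hee
    · exact le_of_eq hpeq
    · exact le_of_eq hpΔeq
  have hmax : nuMax p Q (SCgen p Δ) = ((e₂ + 1 : ℕ) : ℕ∞) := by
    rw [hSC]
    apply le_antisymm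
    · apply sSup_le
      rintro b ⟨s, hs, rfl⟩
      exact hallub s hs
    · rw [← hpeq]
      apply le_sSup
      exact ⟨(p:ℤ_[p]), by simp, rfl⟩
  refine ⟨hmax, ?_⟩
  intro s₀ hs₀ hns₀
  rw [hmax] at hns₀
  rw [hSC] at hs₀
  have hdiff : ∀ s₁ : ℤ_[p], s₁ ∈ ({1, Δ, (p : ℤ_[p]), (p : ℤ_[p]) * Δ} : Set ℤ_[p]) →
      s₁ ≠ s₀ → nuS p Q s₁ = ((e₂+1:ℕ):ℕ∞) →
      nuMax p Q (SCgen p Δ \ {s₀}) = ((e₂ + 1 : ℕ) : ℕ∞) := by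
    intro s₁ hs₁ hne h₁
    rw [hSC]
    apply le_antisymm
    · apply sSup_le
      rintro b ⟨s, hs, rfl⟩
      exact hallub s hs.1
    · rw [← h₁]
      apply le_sSup
      exact ⟨s₁, ⟨hs₁, hne⟩, rfl⟩
  have hpne : (p:ℤ_[p])*Δ ≠ (p:ℤ_[p]) := by
    intro h
    apply hΔ.2
    have hΔ1 : Δ = 1 := by
      have := mul_left_cancel₀ (aux_p_ne_zero (p := p)) (h.trans (mul_one (p:ℤ_[p])).symm)
      exact this
    rw [hΔ1]
    exact IsSquare.one
  have hcontr : ∀ s : ℤ_[p], s.valuation = 0 → nuS p Q s ≠ ((e₂+1:ℕ):ℕ∞) := by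
    intro s hs hcon
    have := hub s hs
    rw [hcon, Nat.cast_le] at this
    omega
  simp only [Set.mem_insert_iff, Set.mem_singleton_iff] at hs₀
  rcases hs₀ with rfl | rfl | rfl | rfl
  · exact absurd hns₀ (hcontr _ hval1)
  · exact absurd hns₀ (hcontr _ hvalΔ)
  · exact hdiff ((p:ℤ_[p])*Δ) (by simp) hpne hpΔeq
  · exact hdiff (p:ℤ_[p]) (by simp) (fun h => hpne h.symm) hpeq
end

section
/- Let L be a ℤ₂-lattice admitting a Jordan splitting L ≅ 𝔸 ⊥ 2^{e₃}𝔹 ⊥ ℓ where e₃ ≥ 0, 𝔹 is the binary unimodular even lattice ℍ (Gram matrix [[0,1],[1,0]]) or 𝔸 (Gram matrix [[2,1],[1,2]]), and the norm of ℓ is contained in 2^{e₃+1}ℤ₂. Then the set of elements of ℤ₂ represented by L equals {γ ∈ ℤ₂ \ {0} : ord₂(γ) is odd, or ord₂(γ) ≥ e₃} ∪ {0} if e₃ is odd, and equals {γ ∈ ℤ₂ \ {0} : ord₂(γ) is odd, or ord₂(γ) ≥ e₃+1} ∪ {0} if e₃ is even. -/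
open Matrix PadicInt Polynomial

private lemma two_dvd_iff' (x : ℤ_[2]) : (2:ℤ_[2]) ∣ x ↔ (PadicInt.toZMod x : ZMod 2) = 0 := by
  rw [← Ideal.mem_span_singleton]
  have h2 : ((2:ℕ) : ℤ_[2]) = (2:ℤ_[2]) := by norm_cast
  rw [← h2, ← PadicInt.maximalIdeal_eq_span_p, ← PadicInt.ker_toZMod, RingHom.mem_ker]

private lemma dvd_pow_iff_le_val' (n : ℕ) (x : ℤ_[2]) (hx : x ≠ 0) :
    (2:ℤ_[2])^n ∣ x ↔ (n:ℤ) ≤ x.valuation := by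
  have h2 : ((2:ℕ) : ℤ_[2]) = (2:ℤ_[2]) := by norm_cast
  rw [← h2, ← Ideal.mem_span_singleton, ← PadicInt.norm_le_pow_iff_mem_span_pow,
    PadicInt.norm_le_pow_iff_le_valuation x hx n]
  exact Nat.cast_le.symm

private lemma val_eq_zero_of_not_dvd' {x : ℤ_[2]} (h : ¬ (2:ℤ_[2]) ∣ x) : x.valuation = 0 := by
  have hx : x ≠ 0 := by rintro rfl; exact h (dvd_zero _)
  have := (dvd_pow_iff_le_val' 1 x hx).not.mp (by simpa using h)
  have h0 := Nat.zero_le <| PadicInt.valuation x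
  omega

private lemma val_two_pow_mul' (n : ℕ) (c : ℤ_[2]) (hc : c ≠ 0) :
    ((2:ℤ_[2]) ^ n * c).valuation = n + c.valuation := by
  have h2 : ((2:ℕ) : ℤ_[2]) = (2:ℤ_[2]) := by norm_cast
  rw [← h2]
  exact PadicInt.valuation_p_pow_mul n c hc

private lemma zmod2_aux' : ∀ x y : ZMod 2, (¬x = 0 ∨ ¬y = 0) → ¬(x^2 + x*y + y^2 = 0) := by decide

private lemma norm_form_odd' {a b : ℤ_[2]} (h : ¬ (2:ℤ_[2]) ∣ a ∨ ¬ (2:ℤ_[2]) ∣ b) :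
    ¬ (2:ℤ_[2]) ∣ (a^2 + a*b + b^2) := by
  simp only [two_dvd_iff'] at h ⊢
  have heq : (PadicInt.toZMod (a^2+a*b+b^2) : ZMod 2)
      = (toZMod a)^2 + (toZMod a)*(toZMod b) + (toZMod b)^2 := by
    simp [map_add, _root_.map_mul, map_pow]
  rw [heq]
  exact zmod2_aux' _ _ h

private lemma even_val_aux' : ∀ n : ℕ, ∀ a b : ℤ_[2], a^2+a*b+b^2 ≠ 0 →
    (a^2+a*b+b^2).valuation ≤ (n:ℤ) → Even (a^2+a*b+b^2).valuation := by
  intro n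
  induction n using Nat.strong_induction_on with
  | _ n ih =>
    intro a b hne hle
    by_cases ha : (2:ℤ_[2]) ∣ a
    · by_cases hb : (2:ℤ_[2]) ∣ b
      · obtain ⟨a', rfl⟩ := ha
        obtain ⟨b', rfl⟩ := hb
        have key : (2*a')^2+(2*a')*(2*b')+(2*b')^2 = 2^2 * (a'^2+a'*b'+b'^2) := by ring
        rw [key] at hne hle ⊢
        have hy : a'^2+a'*b'+b'^2 ≠ 0 := by
          intro h; rw [h, mul_zero] at hne; exact hne rfl
        rw [val_two_pow_mul' 2 _ hy] at hle ⊢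
        have hvy := Nat.zero_le <| PadicInt.valuation (a'^2+a'*b'+b'^2)
        have hn2 : n - 2 < n := by omega
        obtain ⟨k, hk⟩ := ih (n-2) hn2 a' b' hy (by push_cast; omega)
        exact ⟨k+1, by omega⟩
      · rw [val_eq_zero_of_not_dvd' (norm_form_odd' (Or.inr hb))]; exact Even.zero
    · rw [val_eq_zero_of_not_dvd' (norm_form_odd' (Or.inl ha))]; exact Even.zero

private lemma even_val' {a b : ℤ_[2]} (h : a^2+a*b+b^2 ≠ 0) : Even (a^2+a*b+b^2).valuation := by
  have h0 := Nat.zero_le <| PadicInt.valuation (a^2+a*b+b^2)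
  exact even_val_aux' (a^2+a*b+b^2).valuation a b h (by omega)

private lemma exists_root_unit' {u : ℤ_[2]} (hu : ¬ (2:ℤ_[2]) ∣ u) :
    ∃ a : ℤ_[2], a^2 + a + 1 = u := by
  set F : Polynomial ℤ_[2] := X^2 + X + C (1 - u) with hF
  have hd : F.derivative = 2 * X + 1 := by
    simp [hF, derivative_pow]; rw [map_ofNat]
  have he0 : F.eval 0 = 1 - u := by simp [hF]
  have hd0 : F.derivative.eval 0 = 1 := by rw [hd]; simp
  have hdvd : (2:ℤ_[2]) ∣ (1 - u) := by
    rw [two_dvd_iff'] at hu ⊢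
    have : (toZMod u : ZMod 2) = 1 := by
      revert hu; generalize (toZMod u : ZMod 2) = z; revert z; decide
    simp [this]
  have hlt : ‖F.eval 0‖ < ‖F.derivative.eval 0‖^2 := by
    rw [he0, hd0]
    simp only [norm_one, one_pow]
    rw [PadicInt.norm_lt_one_iff_dvd]
    have h2 : ((2:ℕ) : ℤ_[2]) = (2:ℤ_[2]) := by norm_cast
    rw [h2]; exact hdvd
  obtain ⟨z, hz, -⟩ := hensels_lemma hlt
  refine ⟨z, ?_⟩
  have : z^2 + z + (1 - u) = 0 := by simpa [hF] using hz
  linear_combination this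

private lemma norm_form_represents' {c : ℤ_[2]} (hc : c ≠ 0) (hev : Even c.valuation) :
    ∃ a b : ℤ_[2], a^2 + a*b + b^2 = c := by
  have hspec := PadicInt.unitCoeff_spec hc
  set u : ℤ_[2] := (PadicInt.unitCoeff hc : ℤ_[2]) with hu
  have hunit : IsUnit u := (PadicInt.unitCoeff hc).isUnit
  have hudvd : ¬ (2:ℤ_[2]) ∣ u := by
    intro hdvd
    have h1 : ‖u‖ = 1 := PadicInt.isUnit_iff.mp hunit
    have := (PadicInt.norm_lt_one_iff_dvd u).mpr (by
      have h2 : ((2:ℕ) : ℤ_[2]) = (2:ℤ_[2]) := by norm_cast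
      rw [h2]; exact hdvd)
    rw [h1] at this; exact lt_irrefl _ this
  obtain ⟨a0, ha0⟩ := exists_root_unit' hudvd
  have h0 := Nat.zero_le <| PadicInt.valuation c
  obtain ⟨k, hk⟩ := hev
  have hna : c.valuation = 2 * k := by omega
  refine ⟨2^k * a0, 2^k, ?_⟩
  have h2 : ((2:ℕ) : ℤ_[2]) = (2:ℤ_[2]) := by norm_cast
  rw [hna, h2] at hspec
  calc (2^k * a0)^2 + (2^k * a0)*(2^k) + (2^k)^2
      = u * 2^(2*k) := by rw [← ha0]; ring
    _ = c := hspec.symm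

private lemma scaled_repr' {c : ℤ_[2]} (hc : c ≠ 0) (h : Odd c.valuation) :
    ∃ a b : ℤ_[2], 2*a^2+2*a*b+2*b^2 = c := by
  have h0 := Nat.zero_le <| PadicInt.valuation c
  have h1 : (1:ℤ) ≤ c.valuation := by obtain ⟨k,hk⟩ := h; omega
  have hdvd : (2:ℤ_[2]) ∣ c := by
    have := (dvd_pow_iff_le_val' 1 c hc).mpr (by exact_mod_cast h1); simpa using this
  obtain ⟨d, rfl⟩ := hdvd
  have hd0 : d ≠ 0 := by rintro rfl; simp at hc
  have hval : (2*d).valuation = 1 + d.valuation := by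
    have := val_two_pow_mul' 1 d hd0; simpa using this
  have hev : Even d.valuation := by
    rw [hval] at h; obtain ⟨k,hk⟩ := h; exact ⟨k, by omega⟩
  obtain ⟨a, b, hab⟩ := norm_form_represents' hd0 hev
  exact ⟨a, b, by linear_combination 2*hab⟩

private lemma val_two_pow' (n : ℕ) : ((2:ℤ_[2])^n).valuation = n := by
  have := val_two_pow_mul' n 1 one_ne_zero
  simpa using this

private lemma two_pow_ne_zero' (n : ℕ) : ((2:ℤ_[2])^n) ≠ 0 :=
  pow_ne_zero n two_ne_zero

private lemma fwd_lemma' (e₃ : ℕ) (a b r c : ℤ_[2]) (h : 2*(a^2+a*b+b^2) + r = c)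
    (hr : (2:ℤ_[2])^(e₃+1) ∣ r) (hc : c ≠ 0) (hnodd : ¬ Odd c.valuation) :
    ((e₃:ℤ)+1) ≤ c.valuation := by
  by_contra hlt
  have hvpos := Nat.zero_le <| PadicInt.valuation c
  obtain ⟨k, hk⟩ : ∃ k : ℕ, (k:ℤ) = c.valuation := ⟨c.valuation, by omega⟩
  have hkle : k ≤ e₃ := by omega
  have hN0 : a^2+a*b+b^2 ≠ 0 := by
    intro h0
    rw [h0] at h
    have hd := (dvd_pow_iff_le_val' (e₃+1) c hc).mp (by rw [← h]; simpa using hr)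
    push_cast at hd
    omega
  have h2N0 : 2*(a^2+a*b+b^2) ≠ 0 := mul_ne_zero two_ne_zero hN0
  have hval2N : (2*(a^2+a*b+b^2)).valuation = 1 + (a^2+a*b+b^2).valuation := by
    have := val_two_pow_mul' 1 _ hN0; simpa using this
  have hdvdc : (2:ℤ_[2])^k ∣ c := (dvd_pow_iff_le_val' k c hc).mpr (by omega)
  have hdvdr : (2:ℤ_[2])^k ∣ r := dvd_trans (pow_dvd_pow 2 (by omega : k ≤ e₃+1)) hr
  have hdvd2N : (2:ℤ_[2])^k ∣ 2*(a^2+a*b+b^2) := by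
    have : 2*(a^2+a*b+b^2) = c - r := by linear_combination h
    rw [this]; exact dvd_sub hdvdc hdvdr
  have hndvd2N : ¬ (2:ℤ_[2])^(k+1) ∣ 2*(a^2+a*b+b^2) := by
    intro hdd
    have hdc : (2:ℤ_[2])^(k+1) ∣ c := by
      rw [← h]; exact dvd_add hdd (dvd_trans (pow_dvd_pow 2 (by omega : k+1 ≤ e₃+1)) hr)
    have := (dvd_pow_iff_le_val' (k+1) c hc).mp hdc
    omega
  have h1 := (dvd_pow_iff_le_val' k _ h2N0).mp hdvd2N
  have h2 := (dvd_pow_iff_le_val' (k+1) _ h2N0).not.mp hndvd2N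
  rw [hval2N] at h1 h2
  obtain ⟨t, ht⟩ := even_val' hN0
  rw [Nat.not_odd_iff_even] at hnodd
  obtain ⟨s, hs⟩ := hnodd
  omega

/-- For `L ≅ 𝔸 ⊥ 2^{e₃}𝔹 ⊥ ℓ` over `ℤ₂` with `𝔹 ∈ {ℍ, 𝔸}` and `𝔫(ℓ) ⊆ 2^{e₃+1}ℤ₂`,
the set of represented elements is `{γ ≠ 0 : ord₂ γ odd or ≥ e₃} ∪ {0}` when `e₃` is
odd, and `{γ ≠ 0 : ord₂ γ odd or ≥ e₃ + 1} ∪ {0}` when `e₃` is even. -/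
theorem stmt_7 (e₃ : ℕ) (m : ℕ) (H : Matrix (Fin m) (Fin m) ℤ_[2]) (hsym : H.IsSymm)
    (hnorm : ∀ w : Fin m → ℤ_[2], (2 : ℤ_[2]) ^ (e₃ + 1) ∣ w ⬝ᵥ H.mulVec w)
    (QB : ℤ_[2] → ℤ_[2] → ℤ_[2])
    (hQB : (∀ u v, QB u v = 2 * u * v) ∨
      (∀ u v, QB u v = 2 * u ^ 2 + 2 * u * v + 2 * v ^ 2)) :
    (Odd e₃ →
      {c : ℤ_[2] | ∃ (a b u v : ℤ_[2]) (w : Fin m → ℤ_[2]),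
          (2 * a ^ 2 + 2 * a * b + 2 * b ^ 2) + 2 ^ e₃ * QB u v + w ⬝ᵥ H.mulVec w = c} =
        {γ : ℤ_[2] | γ = 0 ∨ (γ ≠ 0 ∧ (Odd γ.valuation ∨ (e₃ : ℤ) ≤ γ.valuation))}) ∧
    (Even e₃ →
      {c : ℤ_[2] | ∃ (a b u v : ℤ_[2]) (w : Fin m → ℤ_[2]),
          (2 * a ^ 2 + 2 * a * b + 2 * b ^ 2) + 2 ^ e₃ * QB u v + w ⬝ᵥ H.mulVec w = c} =
        {γ : ℤ_[2] | γ = 0 ∨ (γ ≠ 0 ∧ (Odd γ.valuation ∨ (e₃ + 1 : ℤ) ≤ γ.valuation))}) := by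
  have hQB0 : QB 0 0 = 0 := by rcases hQB with h | h <;> simp [h]
  have hw0 : (0 : Fin m → ℤ_[2]) ⬝ᵥ H.mulVec (0 : Fin m → ℤ_[2]) = 0 := by simp
  set S : Set ℤ_[2] := {c : ℤ_[2] | ∃ (a b u v : ℤ_[2]) (w : Fin m → ℤ_[2]),
      (2 * a ^ 2 + 2 * a * b + 2 * b ^ 2) + 2 ^ e₃ * QB u v + w ⬝ᵥ H.mulVec w = c} with hS
  have hmem0 : (0:ℤ_[2]) ∈ S := ⟨0,0,0,0,0, by rw [hQB0, hw0]; ring⟩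
  have hmemOdd : ∀ c : ℤ_[2], c ≠ 0 → Odd c.valuation → c ∈ S := by
    intro c hc hodd
    obtain ⟨a,b,hab⟩ := scaled_repr' hc hodd
    exact ⟨a,b,0,0,0, by rw [hQB0, hw0]; linear_combination hab⟩
  have hmemH : (∀ u v, QB u v = 2*u*v) → ∀ c : ℤ_[2], (2:ℤ_[2])^(e₃+1) ∣ c → c ∈ S := by
    rintro hB c ⟨d, hd⟩
    exact ⟨0,0,d,1,0, by rw [hB, hw0, hd]; ring⟩
  have hmemA : (∀ u v, QB u v = 2*u^2+2*u*v+2*v^2) → ∀ c : ℤ_[2], c ≠ 0 → Even c.valuation →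
      ((e₃:ℤ)+1) ≤ c.valuation → c ∈ S := by
    intro hB c hc hev hge
    rcases Nat.even_or_odd e₃ with he | he
    · -- e₃ even, so valuation ≥ e₃ + 2 ; subtract 2^(e₃+1)
      have hgev2 : ((e₃:ℤ)+2) ≤ c.valuation := by
        obtain ⟨s,hs⟩ := hev; obtain ⟨t,ht⟩ := he; omega
      have hdvd : (2:ℤ_[2])^(e₃+2) ∣ c :=
        (dvd_pow_iff_le_val' _ c hc).mpr (by push_cast; omega)
      have hdvd1 : (2:ℤ_[2])^(e₃+1) ∣ (c - 2^(e₃+1)) :=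
        dvd_sub (dvd_trans (pow_dvd_pow 2 (by omega)) hdvd) dvd_rfl
      have hndvd : ¬ (2:ℤ_[2])^(e₃+2) ∣ (c - 2^(e₃+1)) := by
        intro hdd
        have h1 : (2:ℤ_[2])^(e₃+2) ∣ (2:ℤ_[2])^(e₃+1) := by
          have h2 : (2:ℤ_[2])^(e₃+1) = c - (c - 2^(e₃+1)) := by ring
          rw [h2]; exact dvd_sub hdvd hdd
        have h3 := (dvd_pow_iff_le_val' (e₃+2) _ (two_pow_ne_zero' (e₃+1))).mp h1
        rw [val_two_pow' (e₃+1)] at h3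
        push_cast at h3; omega
      have hc'0 : c - 2^(e₃+1) ≠ 0 := by
        rintro h0; exact hndvd (h0 ▸ dvd_zero _)
      have hval1 := (dvd_pow_iff_le_val' (e₃+1) _ hc'0).mp hdvd1
      have hval2 := (dvd_pow_iff_le_val' (e₃+2) _ hc'0).not.mp hndvd
      have hvodd : Odd (c - 2^(e₃+1)).valuation := by
        obtain ⟨t,ht⟩ := he; exact ⟨t, by push_cast at hval1 hval2; omega⟩
      obtain ⟨a,b,hab⟩ := scaled_repr' hc'0 hvodd
      refine ⟨a,b,1,0,0, ?_⟩
      rw [hB, hw0]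
      linear_combination hab
    · -- e₃ odd : divide by 2^(e₃+1), quotient has even valuation
      have hdvd : (2:ℤ_[2])^(e₃+1) ∣ c :=
        (dvd_pow_iff_le_val' _ c hc).mpr (by push_cast; omega)
      obtain ⟨d, hd⟩ := hdvd
      have hd0 : d ≠ 0 := by rintro rfl; rw [mul_zero] at hd; exact hc hd
      have hvald : c.valuation = ((e₃:ℤ)+1) + d.valuation := by
        rw [hd, val_two_pow_mul' _ d hd0]; push_cast; ring
      have hevd : Even d.valuation := by
        obtain ⟨s,hs⟩ := hev; obtain ⟨t,ht⟩ := he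
        exact ⟨s - t - 1, by omega⟩
      obtain ⟨u,v,huv⟩ := norm_form_represents' hd0 hevd
      refine ⟨0,0,u,v,0, ?_⟩
      rw [hB, hw0, hd]
      linear_combination (2^(e₃+1) : ℤ_[2]) * huv
  have hfwd : ∀ c : ℤ_[2], c ∈ S → c ≠ 0 → ¬ Odd c.valuation → ((e₃:ℤ)+1) ≤ c.valuation := by
    rintro c ⟨a,b,u,v,w,h⟩ hc hnodd
    apply fwd_lemma' e₃ a b (2^e₃ * QB u v + w ⬝ᵥ H.mulVec w) c (by linear_combination h)
      _ hc hnodd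
    apply dvd_add _ (hnorm w)
    rcases hQB with hB | hB
    · exact ⟨u*v, by rw [hB]; ring⟩
    · exact ⟨u^2+u*v+v^2, by rw [hB]; ring⟩
  constructor
  · intro he
    ext c
    simp only [Set.mem_setOf_eq]
    constructor
    · intro hcS
      by_cases hc0 : c = 0
      · exact Or.inl hc0
      · refine Or.inr ⟨hc0, ?_⟩
        by_cases ho : Odd c.valuation
        · exact Or.inl ho
        · have := hfwd c hcS hc0 ho
          exact Or.inr (by omega)
    · rintro (rfl | ⟨hc0, ho | hge⟩)
      · exact hmem0
      · exact hmemOdd c hc0 ho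
      · by_cases ho : Odd c.valuation
        · exact hmemOdd c hc0 ho
        · have hev : Even c.valuation := Nat.not_odd_iff_even.mp ho
          have hge1 : ((e₃:ℤ)+1) ≤ c.valuation := by
            obtain ⟨s,hs⟩ := hev; obtain ⟨t,ht⟩ := he; omega
          rcases hQB with hB | hB
          · exact hmemH hB c ((dvd_pow_iff_le_val' _ c hc0).mpr (by push_cast; omega))
          · exact hmemA hB c hc0 hev hge1
  · intro he
    ext c
    simp only [Set.mem_setOf_eq]
    constructor
    · intro hcS
      by_cases hc0 : c = 0
      · exact Or.inl hc0
      · refine Or.inr ⟨hc0, ?_⟩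
        by_cases ho : Odd c.valuation
        · exact Or.inl ho
        · have := hfwd c hcS hc0 ho
          exact Or.inr (by omega)
    · rintro (rfl | ⟨hc0, ho | hge⟩)
      · exact hmem0
      · exact hmemOdd c hc0 ho
      · by_cases ho : Odd c.valuation
        · exact hmemOdd c hc0 ho
        · have hev : Even c.valuation := Nat.not_odd_iff_even.mp ho
          have hge1 : ((e₃:ℤ)+1) ≤ c.valuation := by push_cast at hge ⊢; omega
          rcases hQB with hB | hB
          · exact hmemH hB c ((dvd_pow_iff_le_val' _ c hc0).mpr (by push_cast; omega))
          · exact hmemA hB c hc0 hev hge1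
end

section
/- Let p be an odd prime and let L be a ℤ_p-lattice of rank k ≥ 4 with L ≅ ⟨ε₁, p^{e₂}ε₂, …, p^{e_k}ε_k⟩, 0 ≤ e₂ ≤ ⋯ ≤ e_k, ε_i ∈ ℤ_p^×. If the ternary sublattice ⟨ε₁, p^{e₂}ε₂, p^{e₃}ε₃⟩ is anisotropic, then for any vectors x, y ∈ L with ord_p(Q(x)) = ord_p(Q(y)) = ν_p(L), one has B(x,y) ∈ p^{ν_p(L)-1}ℤ_p. -/
/- auxiliary lemmas -/

lemma aux_two_unit_s10 {p : ℕ} [Fact p.Prime] (hp : p ≠ 2) : IsUnit (2 : ℤ_[p]) := by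
  by_contra h
  rw [PadicInt.not_isUnit_iff] at h
  have h2 : ((2 : ℤ) : ℤ_[p]) = (2 : ℤ_[p]) := by norm_cast
  rw [← h2, PadicInt.norm_int_lt_one_iff_dvd] at h
  have := Int.le_of_dvd (by norm_num) h
  have hp2 := (Fact.out : p.Prime).two_le
  omega

lemma aux_dvd_iff {p : ℕ} [Fact p.Prime] (w : ℤ_[p]) (hw : w ≠ 0) (N : ℕ) :
    (p : ℤ_[p]) ^ N ∣ w ↔ (N : ℤ) ≤ w.valuation := by
  rw [← Ideal.mem_span_singleton]
  exact (PadicInt.mem_span_pow_iff_le_valuation w hw N).trans Nat.cast_le.symm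

lemma aux_unit_val {p : ℕ} [Fact p.Prime] {u : ℤ_[p]} (hu : IsUnit u) : u.valuation = 0 := by
  have h0 : u ≠ 0 := hu.ne_zero
  have hnd : ¬ (p : ℤ_[p]) ∣ u := by
    rw [← PadicInt.norm_lt_one_iff_dvd]
    rw [PadicInt.isUnit_iff.mp hu]
    norm_num
  have : ¬ (p : ℤ_[p]) ^ 1 ∣ u := by rwa [pow_one]
  rw [aux_dvd_iff u h0 1] at this
  have := Nat.zero_le u.valuation
  omega

lemma aux_sqrt {p : ℕ} [Fact p.Prime] (hp : p ≠ 2) (r : ℤ_[p]) :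
    ∃ c : ℤ_[p], IsUnit c ∧ c ^ 2 = 1 + (p : ℤ_[p]) * r := by
  have h2 : ‖(2 : ℤ_[p])‖ = 1 := PadicInt.isUnit_iff.mp (aux_two_unit_s10 hp)
  set F : Polynomial ℤ_[p] := Polynomial.X ^ 2 - Polynomial.C (1 + (p : ℤ_[p]) * r) with hF
  have heval : ∀ z : ℤ_[p], F.eval z = z ^ 2 - (1 + (p : ℤ_[p]) * r) := by
    intro z; simp [hF]
  have hderiv : ∀ z : ℤ_[p], F.derivative.eval z = 2 * z := by
    intro z
    simp [hF]
    exact Or.inl one_add_one_eq_two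
  have hprlt : ‖(p : ℤ_[p]) * r‖ < 1 := by
    rw [norm_mul, PadicInt.norm_p]
    have hp1 : (1 : ℝ) < (p : ℝ) := by exact_mod_cast (Fact.out : p.Prime).one_lt
    have : ((p : ℝ))⁻¹ < 1 := inv_lt_one_of_one_lt₀ hp1
    calc ((p : ℝ))⁻¹ * ‖r‖ ≤ ((p : ℝ))⁻¹ * 1 := by
          apply mul_le_mul_of_nonneg_left (PadicInt.norm_le_one r)
          positivity
      _ = ((p : ℝ))⁻¹ := mul_one _
      _ < 1 := this
  have hnorm : ‖F.eval 1‖ < ‖F.derivative.eval 1‖ ^ 2 := by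
    rw [heval, hderiv, mul_one, h2]
    have : (1 : ℤ_[p]) ^ 2 - (1 + (p : ℤ_[p]) * r) = -((p : ℤ_[p]) * r) := by ring
    rw [this, norm_neg, one_pow]
    exact hprlt
  obtain ⟨z, hz, -⟩ := hensels_lemma hnorm
  rw [Polynomial.coe_aeval_eq_eval] at hz
  rw [heval, sub_eq_zero] at hz
  refine ⟨z, ?_, hz⟩
  rw [PadicInt.isUnit_iff]
  have hone : ‖(1 : ℤ_[p]) + (p : ℤ_[p]) * r‖ = 1 := by
    have hne : ‖(1 : ℤ_[p])‖ ≠ ‖(p : ℤ_[p]) * r‖ := by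
      rw [norm_one]; exact (ne_of_gt hprlt)
    rw [PadicInt.norm_add_eq_max_of_ne hne, norm_one, max_eq_left (le_of_lt hprlt)]
  have hnz : ‖z‖ * ‖z‖ = 1 := by
    rw [← norm_mul, ← sq, hz, hone]
  nlinarith [norm_nonneg z, PadicInt.norm_le_one z]

/-- For an odd prime `p` and a diagonal lattice `L ≅ ⟨ε₁, p^{e₂}ε₂, …, p^{e_k}ε_k⟩`
of rank `k ≥ 4` whose leading ternary sublattice is anisotropic, any two vectors
`x, y ∈ L` with `ord_p(Q(x)) = ord_p(Q(y)) = ν_p(L)` satisfy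
`B(x,y) ∈ p^{ν_p(L)-1}ℤ_p`. -/
theorem stmt_10 (p : ℕ) [Fact p.Prime] (hp : p ≠ 2)
    (Δ : ℤ_[p]) (hΔ : IsUnit Δ ∧ ¬IsSquare Δ)
    (k : ℕ) (hk : 4 ≤ k) (e : ℕ → ℕ) (ε : ℕ → ℤ_[p]ˣ)
    (he0 : e 0 = 0) (hmono : ∀ i j, i ≤ j → j < k → e i ≤ e j)
    (haniso : ∀ v : Fin 3 → ℚ_[p],
      ((ε 0 : ℤ_[p]) : ℚ_[p]) * v 0 ^ 2 +
        (p : ℚ_[p]) ^ (e 1) * ((ε 1 : ℤ_[p]) : ℚ_[p]) * v 1 ^ 2 +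
        (p : ℚ_[p]) ^ (e 2) * ((ε 2 : ℤ_[p]) : ℚ_[p]) * v 2 ^ 2 = 0 → v = 0)
    (n : ℕ)
    (hnu : nuMax p {c | ∃ x : ℕ → ℤ_[p],
        (∑ i ∈ Finset.range k, (p : ℤ_[p]) ^ (e i) * (ε i : ℤ_[p]) * (x i) ^ 2) = c}
        (SCgen p Δ) = (n : ℕ∞))
    (x y : ℕ → ℤ_[p])
    (hx0 : (∑ i ∈ Finset.range k, (p : ℤ_[p]) ^ (e i) * (ε i : ℤ_[p]) * (x i) ^ 2) ≠ 0)
    (hy0 : (∑ i ∈ Finset.range k, (p : ℤ_[p]) ^ (e i) * (ε i : ℤ_[p]) * (y i) ^ 2) ≠ 0)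
    (hxv : (∑ i ∈ Finset.range k,
        (p : ℤ_[p]) ^ (e i) * (ε i : ℤ_[p]) * (x i) ^ 2).valuation = (n : ℤ))
    (hyv : (∑ i ∈ Finset.range k,
        (p : ℤ_[p]) ^ (e i) * (ε i : ℤ_[p]) * (y i) ^ 2).valuation = (n : ℤ)) :
    (p : ℤ_[p]) ^ (n - 1) ∣
      ∑ i ∈ Finset.range k, (p : ℤ_[p]) ^ (e i) * (ε i : ℤ_[p]) * x i * y i := by
  classical
  set QSet : Set ℤ_[p] := {c | ∃ x : ℕ → ℤ_[p],
      (∑ i ∈ Finset.range k, (p : ℤ_[p]) ^ (e i) * (ε i : ℤ_[p]) * (x i) ^ 2) = c} with hQS_def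
  set A := ∑ i ∈ Finset.range k, (p : ℤ_[p]) ^ (e i) * (ε i : ℤ_[p]) * (x i) ^ 2 with hA_def
  set C := ∑ i ∈ Finset.range k, (p : ℤ_[p]) ^ (e i) * (ε i : ℤ_[p]) * (y i) ^ 2 with hC_def
  set Bv := ∑ i ∈ Finset.range k, (p : ℤ_[p]) ^ (e i) * (ε i : ℤ_[p]) * x i * y i with hB_def
  by_contra hB
  have hB0 : Bv ≠ 0 := by rintro h; exact hB (h ▸ dvd_zero _)
  have hvB : ¬ ((n - 1 : ℕ) : ℤ) ≤ Bv.valuation := fun h => hB ((aux_dvd_iff Bv hB0 _).mpr h)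
  have hBnon : (0 : ℤ) ≤ (Bv.valuation : ℤ) := Int.natCast_nonneg _
  set m := (Bv.valuation : ℤ).natAbs with hm_def
  have hmval : Bv.valuation = (m : ℤ) := (Int.natAbs_of_nonneg hBnon).symm
  have hmn : m + 2 ≤ n := by
    rw [hmval] at hvB
    omega
  have hA : (p : ℤ_[p]) ^ n ∣ A := (aux_dvd_iff A hx0 n).mpr (le_of_eq hxv.symm)
  have hC : (p : ℤ_[p]) ^ n ∣ C := (aux_dvd_iff C hy0 n).mpr (le_of_eq hyv.symm)
  set b : ℤ_[p]ˣ := PadicInt.unitCoeff hB0 with hb_def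
  have hBspec : Bv = (b : ℤ_[p]) * (p : ℤ_[p]) ^ m := by
    rw [hm_def, Int.natAbs_natCast]; exact PadicInt.unitCoeff_spec hB0
  -- representation lemma: L represents p^N * η for all units η and m ≤ N < n
  have hrep : ∀ (η : ℤ_[p]ˣ) (N : ℕ), m ≤ N → N + 1 ≤ n →
      ∃ z : ℕ → ℤ_[p],
        (∑ i ∈ Finset.range k, (p : ℤ_[p]) ^ (e i) * (ε i : ℤ_[p]) * (z i) ^ 2)
          = (p : ℤ_[p]) ^ N * (η : ℤ_[p]) := by
    intro η N hmN hNn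
    have h2 := aux_two_unit_s10 (p := p) hp
    set t : ℤ_[p]ˣ := η * (h2.unit * b)⁻¹ with ht_def
    set T : ℤ_[p] := (p : ℤ_[p]) ^ (N - m) * (t : ℤ_[p]) with hT_def
    have hcoe2 : (h2.unit : ℤ_[p]) = 2 := h2.unit_spec
    have htb_u : (h2.unit * b) * t = η := by
      rw [ht_def, mul_comm η, mul_inv_cancel_left]
    have htb : (2 : ℤ_[p]) * (t : ℤ_[p]) * (b : ℤ_[p]) = (η : ℤ_[p]) := by
      have h := congrArg (Units.val) htb_u
      push_cast at h
      rw [hcoe2] at h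
      linear_combination h
    have key : 2 * T * Bv = (p : ℤ_[p]) ^ N * (η : ℤ_[p]) := by
      rw [hT_def, hBspec]
      calc 2 * ((p : ℤ_[p]) ^ (N - m) * (t : ℤ_[p])) * ((b : ℤ_[p]) * (p : ℤ_[p]) ^ m)
          = ((p : ℤ_[p]) ^ (N - m) * (p : ℤ_[p]) ^ m) * (2 * (t : ℤ_[p]) * (b : ℤ_[p])) := by
            ring
        _ = (p : ℤ_[p]) ^ N * (η : ℤ_[p]) := by
            rw [← pow_add, Nat.sub_add_cancel hmN, htb]
    obtain ⟨D, hD⟩ : (p : ℤ_[p]) ^ (N + 1) ∣ (A + T ^ 2 * C) :=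
      dvd_add ((pow_dvd_pow _ hNn).trans hA) (((pow_dvd_pow _ hNn).trans hC).mul_left _)
    obtain ⟨c, hcu, hc2⟩ := aux_sqrt hp (D * ((η⁻¹ : ℤ_[p]ˣ) : ℤ_[p]))
    obtain ⟨cu, rfl⟩ := hcu
    set c : ℤ_[p] := (cu : ℤ_[p]) with hc_def
    have hγc : ((cu⁻¹ : ℤ_[p]ˣ) : ℤ_[p]) * c = 1 := by
      exact_mod_cast cu.inv_mul
    set γ : ℤ_[p] := ((cu⁻¹ : ℤ_[p]ˣ) : ℤ_[p]) with hγ_def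
    refine ⟨fun i => γ * (x i + T * y i), ?_⟩
    have expand : ∀ i ∈ Finset.range k,
        (p : ℤ_[p]) ^ (e i) * (ε i : ℤ_[p]) * ((fun i => γ * (x i + T * y i)) i) ^ 2
          = γ ^ 2 * ((p : ℤ_[p]) ^ (e i) * (ε i : ℤ_[p]) * (x i) ^ 2)
            + (γ ^ 2 * (2 * T)) * ((p : ℤ_[p]) ^ (e i) * (ε i : ℤ_[p]) * x i * y i)
            + (γ ^ 2 * T ^ 2) * ((p : ℤ_[p]) ^ (e i) * (ε i : ℤ_[p]) * (y i) ^ 2) := by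
      intro i _
      simp only []
      ring
    rw [Finset.sum_congr rfl expand, Finset.sum_add_distrib, Finset.sum_add_distrib,
      ← Finset.mul_sum, ← Finset.mul_sum, ← Finset.mul_sum, ← hA_def, ← hB_def, ← hC_def]
    have hη : (η : ℤ_[p]) * ((η⁻¹ : ℤ_[p]ˣ) : ℤ_[p]) = 1 := by
      exact_mod_cast η.mul_inv
    have hsum : A + 2 * T * Bv + T ^ 2 * C = (p : ℤ_[p]) ^ N * (η : ℤ_[p]) * c ^ 2 := by
      rw [hc2]
      linear_combination hD + key - ((p : ℤ_[p]) ^ (N + 1) * D) * hη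
    calc γ ^ 2 * A + γ ^ 2 * (2 * T) * Bv + γ ^ 2 * T ^ 2 * C
        = γ ^ 2 * (A + 2 * T * Bv + T ^ 2 * C) := by ring
      _ = γ ^ 2 * ((p : ℤ_[p]) ^ N * (η : ℤ_[p]) * c ^ 2) := by rw [hsum]
      _ = (γ * c) ^ 2 * ((p : ℤ_[p]) ^ N * (η : ℤ_[p])) := by ring
      _ = (p : ℤ_[p]) ^ N * (η : ℤ_[p]) := by rw [hγc, one_pow, one_mul]
  -- every square class is represented with valuation ≤ m + 1
  have hmain : ∀ (η : ℤ_[p]ˣ) (v : ℕ), v ≤ 1 → ∀ s : ℤ_[p],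
      s = (p : ℤ_[p]) ^ v * (η : ℤ_[p]) → s.valuation = v →
      nuS p QSet s ≤ ((m + 1 : ℕ) : ℕ∞) := by
    intro η v hv s hs hsv
    set j := (m + v) % 2 with hj
    have hj1 : j ≤ 1 := by omega
    obtain ⟨u, hu⟩ : ∃ u : ℕ, v + 2 * u = m + j := ⟨(m + j - v) / 2, by omega⟩
    obtain ⟨z, hz⟩ := hrep η (m + j) (by omega) (by omega)
    have hmem : ((m + j : ℕ) : ℕ∞) ∈ {m' : ℕ∞ | ∃ u : ℕ,
        m' = ((s.valuation + 2 * u : ℕ) : ℕ∞) ∧ s * (p : ℤ_[p]) ^ (2 * u) ∈ QSet} := by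
      refine ⟨u, ?_, ?_⟩
      · rw [hsv]
        norm_cast
        omega
      · refine ⟨z, ?_⟩
        rw [hz, hs, mul_right_comm, ← pow_add, hu]
    have h1 : nuS p QSet s ≤ ((m + j : ℕ) : ℕ∞) := sInf_le hmem
    refine le_trans h1 ?_
    have hmj : m + j ≤ m + 1 := by omega
    exact Nat.cast_le.mpr hmj
  have hkey : ∀ s ∈ SCgen p Δ, nuS p QSet s ≤ ((m + 1 : ℕ) : ℕ∞) := by
    intro s hs
    rw [SCgen, if_neg hp] at hs
    simp only [Set.mem_insert_iff, Set.mem_singleton_iff] at hs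
    have hΔ0 : Δ ≠ 0 := hΔ.1.ne_zero
    rcases hs with rfl | h | rfl | h
    · exact hmain 1 0 (by norm_num) 1 (by simp) (by simp [PadicInt.valuation_one])
    · rw [h]
      exact hmain hΔ.1.unit 0 (by norm_num) Δ (by simp [hΔ.1.unit_spec])
        (by rw [aux_unit_val hΔ.1])
    · exact hmain 1 1 le_rfl ((p : ℤ_[p])) (by rw [pow_one]; simp)
        (by rw [PadicInt.valuation_p])
    · rw [h]
      have hval : ((p : ℤ_[p]) * Δ).valuation = 1 := by
        have hh := PadicInt.valuation_p_pow_mul 1 Δ hΔ0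
        rw [pow_one] at hh
        rw [hh, aux_unit_val hΔ.1]
      exact hmain hΔ.1.unit 1 le_rfl ((p : ℤ_[p]) * Δ)
        (by rw [pow_one, hΔ.1.unit_spec]) (by rw [hval])
  have hle : nuMax p QSet (SCgen p Δ) ≤ ((m + 1 : ℕ) : ℕ∞) := by
    apply sSup_le
    rintro a ⟨s, hsmem, rfl⟩
    exact hkey s hsmem
  rw [hnu] at hle
  have : n ≤ m + 1 := by exact_mod_cast hle
  omega
end

section
/- Let p be a prime and let M be a binary ℤ_p-lattice with Gram matrix [[p^n a, p^r c],[p^r c, p^n b]] where a, b, c ∈ ℤ_p^× and 0 ≤ r ≤ n - 3 (for p = 2) or 0 ≤ r ≤ n - 2 (for odd p). Then M is isometric to the scaled hyperbolic plane p^r ℍ if p = 2, and to p^r⟨1,-1⟩ if p is odd; in particular M is isotropic over ℚ_p. -/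
open Matrix Polynomial

lemma key {R : Type*} [CommRing R] (A B c y w hB : R)
    (hroot : A + 2*c*y + B*y^2 = 0) (hw : (c + B*y) * w = 1) (hhB : 2*hB = B) :
    (!![1, -(hB*w*w); y, w - (hB*w*w)*y])ᵀ * !![A, c; c, B] *
      !![1, -(hB*w*w); y, w - (hB*w*w)*y] = !![0,1;1,0] := by
  ext i j
  fin_cases i <;> fin_cases j <;>
    simp [Matrix.mul_apply, Fin.sum_univ_succ]
  · linear_combination hroot
  · linear_combination (-(hB*w*w)) * hroot + hw
  · linear_combination (-(hB*w*w)) * hroot + hw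
  · linear_combination (hB*w*w)^2 * hroot + (-(2*(hB*w*w))) * hw + (-(w*w)) * hhB

lemma key2 {R : Type*} [CommRing R] (t : R) (ht : 2*t = 1) :
    (!![1,1;t,-t])ᵀ * !![(0:R),1;1,0] * !![1,1;t,-t] = !![1,0;0,-1] := by
  ext i j
  fin_cases i <;> fin_cases j <;> simp [Matrix.mul_apply, Fin.sum_univ_succ] <;>
    first | ring1 | linear_combination ht | linear_combination -ht

lemma matConj {R : Type*} [CommRing R] (P Q M : Matrix (Fin 2) (Fin 2) R) :
    (P*Q)ᵀ * M * (P*Q) = Qᵀ * (Pᵀ * M * P) * Q := by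
  rw [Matrix.transpose_mul]; simp only [Matrix.mul_assoc]

lemma exists_root {p : ℕ} [Fact p.Prime] (A B c : ℤ_[p]) (h : ‖A‖ < ‖2*c‖^2) :
    ∃ y : ℤ_[p], A + 2*c*y + B*y^2 = 0 := by
  obtain ⟨y, hy, -⟩ := hensels_lemma (p := p) (F := C B * X^2 + C (2*c) * X + C A) (a := 0)
    (by simpa using h)
  exact ⟨y, by simp at hy; linear_combination hy⟩

/-- A binary `ℤ_p`-lattice with Gram matrix `[[pⁿa, pʳc],[pʳc, pⁿb]]`, where `a,b,c`
are units and `r ≤ n-3` (for `p = 2`) resp. `r ≤ n-2` (for odd `p`), is isometric to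
`pʳℍ` when `p = 2` and to `pʳ⟨1,-1⟩` when `p` is odd; in particular it is isotropic
over `ℚ_p`. -/
theorem stmt_11 (p : ℕ) [Fact p.Prime] (n r : ℕ) (a b c : ℤ_[p])
    (ha : IsUnit a) (hb : IsUnit b) (hc : IsUnit c)
    (hr2 : p = 2 → r + 3 ≤ n) (hrodd : p ≠ 2 → r + 2 ≤ n) :
    (∃ P : Matrix (Fin 2) (Fin 2) ℤ_[p], IsUnit P.det ∧
      Pᵀ * !![(p : ℤ_[p]) ^ n * a, (p : ℤ_[p]) ^ r * c;
              (p : ℤ_[p]) ^ r * c, (p : ℤ_[p]) ^ n * b] * P =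
        (if p = 2 then (p : ℤ_[p]) ^ r • !![0, 1; 1, 0]
          else (p : ℤ_[p]) ^ r • !![1, 0; 0, -1])) ∧
    (∃ v : Fin 2 → ℚ_[p], v ≠ 0 ∧
      v ⬝ᵥ (!![(p : ℚ_[p]) ^ n * (a : ℚ_[p]), (p : ℚ_[p]) ^ r * (c : ℚ_[p]);
              (p : ℚ_[p]) ^ r * (c : ℚ_[p]), (p : ℚ_[p]) ^ n * (b : ℚ_[p])]).mulVec v = 0) := by
  have hp := Fact.out (p := p.Prime)
  have hp1 : (1:ℝ) < p := by exact_mod_cast hp.one_lt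
  have hn2 : r + 2 ≤ n := by
    by_cases h : p = 2
    · have := hr2 h; omega
    · exact hrodd h
  set m := n - r with hmdef
  have hm : r + m = n := by omega
  have hm2 : 2 ≤ m := by omega
  set A : ℤ_[p] := (p:ℤ_[p])^m * a with hA
  set B : ℤ_[p] := (p:ℤ_[p])^m * b with hB'
  have hnormA : ‖A‖ = (p:ℝ)^(-(m:ℤ)) := by
    rw [hA, norm_mul, PadicInt.isUnit_iff.mp ha, PadicInt.norm_p_pow, mul_one]
  have hnormB : ‖B‖ = (p:ℝ)^(-(m:ℤ)) := by
    rw [hB', norm_mul, PadicInt.isUnit_iff.mp hb, PadicInt.norm_p_pow, mul_one]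
  have hBlt : ‖B‖ < 1 := by
    rw [hnormB]
    calc (p:ℝ)^(-(m:ℤ)) < (p:ℝ)^(0:ℤ) := by
          apply zpow_lt_zpow_right₀ hp1; omega
      _ = 1 := zpow_zero _
  have h2n1 : p ≠ 2 → ‖(2:ℤ_[p])‖ = 1 := by
    intro hne
    apply le_antisymm (PadicInt.norm_le_one _)
    by_contra hlt
    push_neg at hlt
    have hcast : ((2:ℤ):ℤ_[p]) = (2:ℤ_[p]) := by push_cast; ring
    rw [← hcast, PadicInt.norm_int_lt_one_iff_dvd] at hlt
    have : p ∣ 2 := by exact_mod_cast hlt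
    exact hne ((Nat.prime_dvd_prime_iff_eq hp Nat.prime_two).mp this)
  have hAnorm : ‖A‖ < ‖2*c‖^2 := by
    by_cases h2 : p = 2
    · have hpc : ((p:ℕ):ℤ_[p]) = 2 := by
        have := congrArg (fun k : ℕ => (k:ℤ_[p])) h2; simpa using this
      have h2n : ‖(2:ℤ_[p])‖ = (p:ℝ)⁻¹ := by rw [← hpc, PadicInt.norm_p]
      rw [hnormA, norm_mul 2 c, h2n, PadicInt.isUnit_iff.mp hc, mul_one]
      have hm3 : 3 ≤ m := by have := hr2 h2; omega
      calc (p:ℝ)^(-(m:ℤ)) < (p:ℝ)^(-2:ℤ) := by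
            apply zpow_lt_zpow_right₀ hp1; omega
        _ = ((p:ℝ)⁻¹)^2 := by
            rw [inv_pow, ← zpow_natCast (p:ℝ) 2, ← _root_.zpow_neg]
            norm_num
    · rw [hnormA, norm_mul 2 c, h2n1 h2, PadicInt.isUnit_iff.mp hc, mul_one, one_pow]
      calc (p:ℝ)^(-(m:ℤ)) < (p:ℝ)^(0:ℤ) := by
            apply zpow_lt_zpow_right₀ hp1; omega
        _ = 1 := zpow_zero _
  obtain ⟨y, hroot⟩ := exists_root A B c hAnorm
  have hcu : IsUnit (c + B*y) := by
    rw [PadicInt.isUnit_iff]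
    have hBy : ‖B*y‖ < 1 := lt_of_le_of_lt (by
      rw [norm_mul]
      exact mul_le_of_le_one_right (norm_nonneg _) (PadicInt.norm_le_one y)) hBlt
    have hne : ‖c‖ ≠ ‖B*y‖ := by rw [PadicInt.isUnit_iff.mp hc]; exact ne_of_gt hBy
    rw [PadicInt.norm_add_eq_max_of_ne hne, PadicInt.isUnit_iff.mp hc]
    exact max_eq_left hBy.le
  obtain ⟨u, hu⟩ := hcu
  set w : ℤ_[p] := ((u⁻¹ : ℤ_[p]ˣ) : ℤ_[p]) with hwdef
  have hw : (c + B*y) * w = 1 := by rw [← hu]; exact u.mul_inv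
  have hwu : IsUnit w := (u⁻¹).isUnit
  have hG : !![(p : ℤ_[p]) ^ n * a, (p : ℤ_[p]) ^ r * c;
              (p : ℤ_[p]) ^ r * c, (p : ℤ_[p]) ^ n * b] = (p:ℤ_[p])^r • !![A, c; c, B] := by
    have hpn : (p:ℤ_[p])^n = (p:ℤ_[p])^r * (p:ℤ_[p])^m := by rw [← pow_add, hm]
    ext i j
    fin_cases i <;> fin_cases j <;> simp [hpn, hA, hB', smul_eq_mul] <;> ring
  constructor
  · by_cases hp2 : p = 2
    · rw [if_pos hp2]
      obtain ⟨hB, hhB⟩ : ∃ hB : ℤ_[p], 2 * hB = B := by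
        refine ⟨(p:ℤ_[p])^(m-1) * b, ?_⟩
        have hm1 : m - 1 + 1 = m := by omega
        have hpc : ((p:ℕ):ℤ_[p]) = 2 := by
          have := congrArg (fun k : ℕ => (k:ℤ_[p])) hp2; simpa using this
        have hsp : (p:ℤ_[p])^m = (p:ℤ_[p])^(m-1) * p := by rw [← pow_succ, hm1]
        rw [hB', hsp]
        linear_combination (-((p:ℤ_[p])^(m-1)*b)) * hpc
      refine ⟨!![1, -(hB*w*w); y, w - (hB*w*w)*y], ?_, ?_⟩
      · have hdet : (!![1, -(hB*w*w); y, w - (hB*w*w)*y]).det = w := by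
          rw [Matrix.det_fin_two_of]; ring
        rw [hdet]; exact hwu
      · rw [hG, Matrix.mul_smul, Matrix.smul_mul, key A B c y w hB hroot hw hhB]
    · rw [if_neg hp2]
      have h2u : IsUnit (2:ℤ_[p]) := PadicInt.isUnit_iff.mpr (h2n1 hp2)
      obtain ⟨u2, hu2⟩ := h2u
      set t : ℤ_[p] := ((u2⁻¹ : ℤ_[p]ˣ) : ℤ_[p]) with htdef
      have ht : 2 * t = 1 := by rw [← hu2]; exact u2.mul_inv
      obtain ⟨hB, hhB⟩ : ∃ hB : ℤ_[p], 2 * hB = B := ⟨t*B, by rw [← mul_assoc, ht, one_mul]⟩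
      refine ⟨!![1, -(hB*w*w); y, w - (hB*w*w)*y] * !![1,1;t,-t], ?_, ?_⟩
      · rw [Matrix.det_mul]
        have h1 : (!![1, -(hB*w*w); y, w - (hB*w*w)*y]).det = w := by
          rw [Matrix.det_fin_two_of]; ring
        have h2 : (!![(1:ℤ_[p]),1;t,-t]).det = -1 := by
          rw [Matrix.det_fin_two_of]; linear_combination -ht
        rw [h1, h2]
        exact hwu.mul (IsUnit.neg isUnit_one)
      · rw [hG, Matrix.mul_smul, Matrix.smul_mul, matConj,
          key A B c y w hB hroot hw hhB, key2 t ht]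
  · refine ⟨![(1:ℚ_[p]), (y:ℚ_[p])], ?_, ?_⟩
    · intro h
      have := congrFun h 0
      simp at this
    · have hrootQ := congrArg (fun z : ℤ_[p] => (z:ℚ_[p])) hroot
      push_cast [hA, hB'] at hrootQ
      have h2c : ((2:ℤ_[p]):ℚ_[p]) = 2 := by
        have : ((2:ℕ):ℤ_[p]) = (2:ℤ_[p]) := by push_cast; ring
        rw [← this, PadicInt.coe_natCast]; push_cast; ring
      have hpnQ : (p:ℚ_[p])^n = (p:ℚ_[p])^r * (p:ℚ_[p])^m := by rw [← pow_add, hm]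
      simp [Matrix.mulVec, dotProduct, Fin.sum_univ_succ, hpnQ]
      linear_combination (p:ℚ_[p])^r * hrootQ - (p:ℚ_[p])^r * (c:ℚ_[p]) * (y:ℚ_[p]) * h2c
end

section
/- Let L be a primitive ℤ₂-lattice of rank at least 4 such that 8ℤ₂ is contained in the set of values represented by L. Then ν₂(L) ≤ 4, and in particular ν₂(L) ≤ ν'₂(L) + 3. -/
lemma aux_unit_of_odd (k : ℤ) (hk : ¬ (2:ℤ) ∣ k) : IsUnit (k : ℤ_[2]) := by
  by_contra h
  rw [PadicInt.not_isUnit_iff, PadicInt.norm_int_lt_one_iff_dvd] at h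
  exact hk (by exact_mod_cast h)

lemma aux_val_unit (z : ℤ_[2]) (h : IsUnit z) : z.valuation = 0 := by
  have hz : z ≠ 0 := h.ne_zero
  have h1 := PadicInt.norm_eq_zpow_neg_valuation hz
  rw [PadicInt.isUnit_iff.mp h] at h1
  have h2 : (2:ℝ) ^ (-(z.valuation:ℤ)) = (2:ℝ) ^ (0:ℤ) := by
    rw [zpow_zero]; exact_mod_cast h1.symm
  have := zpow_right_injective₀ (by norm_num) (by norm_num) h2
  omega

lemma aux_val_double (z : ℤ_[2]) (h : IsUnit z) : ((2:ℤ_[2]) * z).valuation = 1 := by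
  have h1 := PadicInt.valuation_p_pow_mul (p := 2) 1 z h.ne_zero
  rw [aux_val_unit z h] at h1
  simpa using h1

lemma aux_nuS_le (QS : Set ℤ_[2]) (s : ℤ_[2]) (u : ℕ) (h : s * (2:ℤ_[2]) ^ (2*u) ∈ QS) :
    nuS 2 QS s ≤ ((s.valuation + 2 * u : ℕ) : ℕ∞) :=
  sInf_le ⟨u, rfl, by simpa using h⟩

lemma aux_nuS_ge_one (QS : Set ℤ_[2]) (s : ℤ_[2]) (h : s.valuation = 1) :
    1 ≤ nuS 2 QS s := by
  apply le_sInf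
  rintro m ⟨u, rfl, -⟩
  rw [h]
  exact_mod_cast Nat.le_add_right 1 (2*u) |>.trans (by simp)

/-- A primitive `ℤ₂`-lattice `L` of rank ≥ 4 with `8ℤ₂ ⊆ Q(L)` satisfies `ν₂(L) ≤ 4`;
in particular `ν₂(L) ≤ ν'₂(L) + 3`. -/
theorem stmt_13 (n : ℕ) (hn : 4 ≤ n)
    (B : (Fin n → ℤ_[2]) →ₗ[ℤ_[2]] (Fin n → ℤ_[2]) →ₗ[ℤ_[2]] ℤ_[2])
    (hsym : ∀ x y, B x y = B y x)
    (hprim : ∃ x y, IsUnit (B x y))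
    (h8 : ∀ c : ℤ_[2], (8 : ℤ_[2]) * c ∈ {c | ∃ x, B x x = c}) :
    nuMax 2 {c | ∃ x, B x x = c} (SCgen 2 0) ≤ 4 ∧
      ∀ s₀ ∈ SCgen 2 0,
        nuS 2 {c | ∃ x, B x x = c} s₀ = nuMax 2 {c | ∃ x, B x x = c} (SCgen 2 0) →
        nuMax 2 {c | ∃ x, B x x = c} (SCgen 2 0) ≤
          nuMax 2 {c | ∃ x, B x x = c} (SCgen 2 0 \ {s₀}) + 3 := by
  set QS : Set ℤ_[2] := {c | ∃ x, B x x = c} with hQSdef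
  have hSC : SCgen 2 0 = ({1, 3, 5, 7, 2, 6, 10, 14} : Set ℤ_[2]) := if_pos rfl
  have u1 : IsUnit (1:ℤ_[2]) := isUnit_one
  have u3 : IsUnit (3:ℤ_[2]) := by
    have := aux_unit_of_odd 3 (by norm_num); simpa using this
  have u5 : IsUnit (5:ℤ_[2]) := by
    have := aux_unit_of_odd 5 (by norm_num); simpa using this
  have u7 : IsUnit (7:ℤ_[2]) := by
    have := aux_unit_of_odd 7 (by norm_num); simpa using this
  -- units: nuS ≤ 4
  have hu : ∀ z : ℤ_[2], IsUnit z → nuS 2 QS z ≤ 4 := by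
    intro z hz
    have hm : z * (2:ℤ_[2]) ^ (2*2) ∈ QS := by
      have := h8 (2*z)
      have he : (8:ℤ_[2]) * (2*z) = z * (2:ℤ_[2]) ^ (2*2) := by ring
      rwa [he] at this
    have h1 := aux_nuS_le QS z 2 hm
    rw [aux_val_unit z hz] at h1
    simpa using h1
  -- doubles of units: nuS ≤ 3 ≤ 4
  have hd : ∀ z : ℤ_[2], IsUnit z → nuS 2 QS ((2:ℤ_[2])*z) ≤ 4 := by
    intro z hz
    have hm : (2:ℤ_[2])*z * (2:ℤ_[2]) ^ (2*1) ∈ QS := by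
      have := h8 z
      have he : (8:ℤ_[2]) * z = (2:ℤ_[2])*z * (2:ℤ_[2]) ^ (2*1) := by ring
      rwa [he] at this
    have h1 := aux_nuS_le QS _ 1 hm
    rw [aux_val_double z hz] at h1
    refine h1.trans ?_
    norm_num
  have hbound : ∀ s ∈ SCgen 2 0, nuS 2 QS s ≤ 4 := by
    rw [hSC]
    rintro s (rfl|rfl|rfl|rfl|rfl|rfl|rfl|rfl)
    · exact hu _ u1
    · exact hu _ u3
    · exact hu _ u5
    · exact hu _ u7
    · have := hd 1 u1; simpa using this
    · have := hd 3 u3; rwa [show (2:ℤ_[2])*3 = 6 by norm_num] at this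
    · have := hd 5 u5; rwa [show (2:ℤ_[2])*5 = 10 by norm_num] at this
    · have := hd 7 u7; rwa [show (2:ℤ_[2])*7 = 14 by norm_num] at this
  have hmax : nuMax 2 QS (SCgen 2 0) ≤ 4 := by
    apply sSup_le
    rintro m ⟨s, hs, rfl⟩
    exact hbound s hs
  refine ⟨hmax, ?_⟩
  intro s₀ hs₀ _
  have hval6 : (6:ℤ_[2]).valuation = 1 := by
    rw [show (6:ℤ_[2]) = 2*3 by norm_num]; exact aux_val_double 3 u3
  have hval2 : (2:ℤ_[2]).valuation = 1 := by
    have := aux_val_double 1 u1; simpa using this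
  have h1 : (1:ℕ∞) ≤ nuMax 2 QS (SCgen 2 0 \ {s₀}) := by
    by_cases h2 : s₀ = 2
    · have mem : (6:ℤ_[2]) ∈ SCgen 2 0 \ {s₀} := by
        refine ⟨by rw [hSC]; simp, ?_⟩
        simp only [Set.mem_singleton_iff, h2]
        norm_num
      exact (aux_nuS_ge_one QS 6 hval6).trans (le_sSup (Set.mem_image_of_mem _ mem))
    · have mem : (2:ℤ_[2]) ∈ SCgen 2 0 \ {s₀} := by
        refine ⟨by rw [hSC]; simp, ?_⟩
        simp only [Set.mem_singleton_iff]
        exact fun h => h2 h.symm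
      exact (aux_nuS_ge_one QS 2 hval2).trans (le_sSup (Set.mem_image_of_mem _ mem))
  calc nuMax 2 QS (SCgen 2 0) ≤ 4 := hmax
    _ = 1 + 3 := by norm_num
    _ ≤ nuMax 2 QS (SCgen 2 0 \ {s₀}) + 3 := add_le_add_left h1 3
end

section
/- Let ε ∈ ℤ₂^× and let e₂ ≥ 1 be odd. Then the ℤ₂-lattice ⟨ε⟩ ⊥ 2^{e₂}𝔸 (Gram matrix diag(ε) ⊥ 2^{e₂}[[2,1],[1,2]]) represents every element of 2^{e₂+1}ℤ₂, and represents no element of the form 2^{e₂}s with s ∈ ℤ₂^×. -/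
lemma aux_two_dvd_iff (x : ℤ_[2]) : (2 : ℤ_[2]) ∣ x ↔ PadicInt.toZMod x = 0 := by
  rw [show ((2:ℤ_[2]) ∣ x ↔ x ∈ RingHom.ker (PadicInt.toZMod : ℤ_[2] →+* ZMod 2)) from ?_]
  · exact Iff.rfl
  rw [PadicInt.ker_toZMod, PadicInt.maximalIdeal_eq_span_p, Ideal.mem_span_singleton]
  norm_num

lemma aux_odd_sub (u : ℤ_[2]) (hu : ¬ (2 : ℤ_[2]) ∣ u) : (2 : ℤ_[2]) ∣ 1 - u := by
  rw [aux_two_dvd_iff] at hu ⊢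
  have h : ∀ a : ZMod 2, a ≠ 0 → a = 1 := by decide
  rw [map_sub, map_one, h _ hu, sub_self]

lemma aux_norm_rep (u : ℤ_[2]) (hu : ¬ (2 : ℤ_[2]) ∣ u) :
    ∃ y z : ℤ_[2], y ^ 2 + y * z + z ^ 2 = u := by
  set F : Polynomial ℤ_[2] := Polynomial.X ^ 2 + Polynomial.X + Polynomial.C (1 - u) with hF
  have heval : F.eval 0 = 1 - u := by simp [hF]
  have hderiv : F.derivative.eval 0 = 1 := by
    simp [hF, Polynomial.derivative_X_pow]
  have hnorm : ‖F.eval 0‖ < ‖F.derivative.eval 0‖ ^ 2 := by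
    rw [heval, hderiv, norm_one, one_pow]
    rw [PadicInt.norm_lt_one_iff_dvd]
    exact_mod_cast aux_odd_sub u hu
  obtain ⟨z, hz, -⟩ := hensels_lemma hnorm
  refine ⟨z, 1, ?_⟩
  have : z ^ 2 + z + (1 - u) = 0 := by simpa [hF] using hz
  linear_combination this

lemma aux_sq_ne (m : ℕ) : ∀ x u : ℤ_[2], IsUnit u → x ^ 2 ≠ 2 ^ (2 * m + 1) * u := by
  induction m with
  | zero =>
    intro x u hu heq
    have h2 : Prime (2 : ℤ_[2]) := by exact_mod_cast PadicInt.prime_p (p := 2)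
    have hdx : (2 : ℤ_[2]) ∣ x := by
      have : (2 : ℤ_[2]) ∣ x ^ 2 := ⟨u, by simpa using heq⟩
      exact h2.dvd_of_dvd_pow this
    obtain ⟨t, rfl⟩ := hdx
    have : (2 : ℤ_[2]) * t ^ 2 = u := by
      have h4 : (2 : ℤ_[2]) ≠ 0 := h2.ne_zero
      apply mul_left_cancel₀ h4
      linear_combination heq
    exact h2.not_unit (isUnit_of_mul_isUnit_left (this ▸ hu))
  | succ n ih =>
    intro x u hu heq
    have h2 : Prime (2 : ℤ_[2]) := by exact_mod_cast PadicInt.prime_p (p := 2)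
    have hdx : (2 : ℤ_[2]) ∣ x := by
      have : (2 : ℤ_[2]) ∣ x ^ 2 := ⟨2 ^ (2 * n + 2) * u, by rw [heq]; ring⟩
      exact h2.dvd_of_dvd_pow this
    obtain ⟨t, rfl⟩ := hdx
    apply ih t u hu
    have h4 : (2 : ℤ_[2]) * 2 ≠ 0 := by
      exact mul_ne_zero h2.ne_zero h2.ne_zero
    apply mul_left_cancel₀ h4
    linear_combination heq

/-- For a unit `ε ∈ ℤ₂^×` and odd `e₂ ≥ 1`, the lattice `⟨ε⟩ ⊥ 2^{e₂}𝔸` represents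
every element of `2^{e₂+1}ℤ₂` and no element `2^{e₂}s` with `s` a unit. -/
theorem stmt_14 (ε : ℤ_[2]ˣ) (e₂ : ℕ) (he₂ : 1 ≤ e₂) (hodd : Odd e₂) :
    (∀ c : ℤ_[2], ∃ x y z : ℤ_[2],
      (ε : ℤ_[2]) * x ^ 2 + 2 ^ e₂ * (2 * y ^ 2 + 2 * y * z + 2 * z ^ 2) =
        2 ^ (e₂ + 1) * c) ∧
    (∀ s : ℤ_[2], IsUnit s → ∀ x y z : ℤ_[2],
      (ε : ℤ_[2]) * x ^ 2 + 2 ^ e₂ * (2 * y ^ 2 + 2 * y * z + 2 * z ^ 2) ≠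
        2 ^ e₂ * s) := by
  have h2 : Prime (2 : ℤ_[2]) := by exact_mod_cast PadicInt.prime_p (p := 2)
  have hεnd : ¬ (2 : ℤ_[2]) ∣ (ε : ℤ_[2]) :=
    fun h => h2.not_unit (isUnit_of_dvd_unit h ε.isUnit)
  obtain ⟨k, hk⟩ := hodd
  constructor
  · intro c
    by_cases hc : (2 : ℤ_[2]) ∣ c
    · have hcε : ¬ (2 : ℤ_[2]) ∣ (c - (ε : ℤ_[2])) := by
        intro h
        exact hεnd (by simpa using dvd_sub hc h)
      obtain ⟨y, z, hN⟩ := aux_norm_rep _ hcε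
      refine ⟨2 ^ (k + 1), y, z, ?_⟩
      subst hk
      linear_combination (2 : ℤ_[2]) ^ (2 * k + 2) * hN
    · obtain ⟨y, z, hN⟩ := aux_norm_rep _ hc
      refine ⟨0, y, z, ?_⟩
      linear_combination (2 : ℤ_[2]) ^ (e₂ + 1) * hN
  · intro s hs x y z heq
    set w : ℤ_[2] := s - 2 * (y ^ 2 + y * z + z ^ 2) with hw
    have hεx : (ε : ℤ_[2]) * x ^ 2 = 2 ^ e₂ * w := by
      rw [hw]; linear_combination heq
    have hwu : IsUnit w := by
      by_contra hnu
      have hdvd : (2 : ℤ_[2]) ∣ w :=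
        (PadicInt.norm_lt_one_iff_dvd w).mp (PadicInt.not_isUnit_iff.mp hnu)
      have : (2 : ℤ_[2]) ∣ s := by
        have : s = w + 2 * (y ^ 2 + y * z + z ^ 2) := by rw [hw]; ring
        rw [this]
        exact dvd_add hdvd ⟨_, rfl⟩
      exact h2.not_unit (isUnit_of_dvd_unit this hs)
    have h1 : ((ε⁻¹ : ℤ_[2]ˣ) : ℤ_[2]) * (ε : ℤ_[2]) = 1 := by
      exact_mod_cast ε.inv_mul
    have hx2 : x ^ 2 = 2 ^ e₂ * (((ε⁻¹ : ℤ_[2]ˣ) : ℤ_[2]) * w) := by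
      linear_combination ((ε⁻¹ : ℤ_[2]ˣ) : ℤ_[2]) * hεx - x ^ 2 * h1
    subst hk
    exact aux_sq_ne k x _ (ε⁻¹.isUnit.mul hwu) hx2
end

section
/- Let ε ∈ ℤ₂^× and let e₂ ≥ 3 be an integer. If e₂ is odd, then the ℤ₂-lattice ⟨ε⟩ ⊥ 2^{e₂}ℍ represents every element of 2^{e₂+1}ℤ₂ but no element of order exactly e₂; if e₂ is even, it represents every element of 2^{e₂}ℤ₂ of order ≥ e₂ but no nonzero element of order exactly e₂ - 1. -/
lemma aux_dvd_iff_s15 (a : ℤ_[2]) : (2:ℤ_[2]) ∣ a ↔ PadicInt.toZMod a = 0 := by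
  have h := PadicInt.ker_toZMod (p := 2)
  have h2 : ((2:ℕ) : ℤ_[2]) = (2:ℤ_[2]) := by norm_num
  rw [← Ideal.mem_span_singleton, ← h2, ← PadicInt.maximalIdeal_eq_span_p, ← h,
    RingHom.mem_ker]

lemma aux_rep (ε : ℤ_[2]ˣ) (c : ℤ_[2]) : ∃ t w : ℤ_[2], c = (ε:ℤ_[2]) * t^2 + 2 * w := by
  rcases eq_or_ne (PadicInt.toZMod c) 0 with h | h
  · obtain ⟨w, hw⟩ := (aux_dvd_iff_s15 c).2 h
    exact ⟨0, w, by rw [hw]; ring⟩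
  · have hc1 : PadicInt.toZMod c = 1 := by
      have : ∀ b : ZMod 2, b = 0 ∨ b = 1 := by decide
      rcases this (PadicInt.toZMod c) with h' | h' <;> tauto
    have hε1 : PadicInt.toZMod (ε:ℤ_[2]) = 1 := by
      have hu : IsUnit (PadicInt.toZMod (ε:ℤ_[2])) := (ε.isUnit).map _
      have : ∀ b : (ZMod 2)ˣ, (b : ZMod 2) = 1 := by decide
      obtain ⟨u, hu⟩ := hu
      rw [← hu]; exact this u
    have : PadicInt.toZMod (c - (ε:ℤ_[2])) = 0 := by
      rw [map_sub, hc1, hε1, sub_self]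
    obtain ⟨w, hw⟩ := (aux_dvd_iff_s15 _).2 this
    refine ⟨1, w, ?_⟩
    have : c - (ε:ℤ_[2]) = 2 * w := hw
    linear_combination this

lemma aux_nonrep (ε : ℤ_[2]ˣ) (n : ℕ) (γ : ℤ_[2]) (hγ : γ ≠ 0)
    (hodd : Odd γ.valuation) (hlt : γ.valuation < (n:ℤ) + 1) (x y z : ℤ_[2]) :
    (ε:ℤ_[2]) * x^2 + 2^(n+1)*y*z ≠ γ := by
  intro h
  set S := (2:ℤ_[2])^(n+1)*y*z with hS
  have hp2 : ((2:ℕ) : ℤ_[2]) = (2:ℤ_[2]) := by norm_num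
  have hSle : ‖S‖ ≤ (2:ℝ)^(-((n:ℤ)+1)) := by
    have : ‖S‖ = ‖(2:ℤ_[2])^(n+1)‖ * ‖y‖ * ‖z‖ := by
      rw [hS, norm_mul, norm_mul]
    rw [this, ← hp2, PadicInt.norm_p_pow]
    have : ((2:ℕ):ℝ) ^ (-((n+1:ℕ)):ℤ) = (2:ℝ)^(-((n:ℤ)+1)) := by push_cast; norm_num
    rw [this]
    calc (2:ℝ)^(-((n:ℤ)+1)) * ‖y‖ * ‖z‖ ≤ (2:ℝ)^(-((n:ℤ)+1)) * 1 * 1 := by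
          gcongr <;> exact PadicInt.norm_le_one _
      _ = (2:ℝ)^(-((n:ℤ)+1)) := by ring
  have hγn : ‖γ‖ = (2:ℝ)^(-(γ.valuation:ℤ)) := by
    have := PadicInt.norm_eq_zpow_neg_valuation hγ
    rwa [show ((2:ℕ):ℝ) = (2:ℝ) by norm_num] at this
  have hlt2 : ‖S‖ < ‖γ‖ := by
    refine lt_of_le_of_lt hSle ?_
    rw [hγn]
    exact zpow_lt_zpow_right₀ (one_lt_two : (1:ℝ) < 2) (by omega)
  have hmax : ‖(ε:ℤ_[2]) * x^2‖ = ‖γ‖ := by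
    have he : (ε:ℤ_[2]) * x^2 = γ + (-S) := by rw [← h]; ring
    rw [he, PadicInt.norm_add_eq_max_of_ne (by rw [norm_neg]; exact hlt2.ne'),
      norm_neg, max_eq_left hlt2.le]
  have hx : x ≠ 0 := by
    intro h0
    rw [h0] at hmax
    apply hγ
    simpa using hmax.symm
  have hxn : ‖(ε:ℤ_[2]) * x^2‖ = (2:ℝ)^(-(2*(x.valuation:ℤ))) := by
    rw [norm_mul, PadicInt.norm_units, one_mul, pow_two, norm_mul,
      PadicInt.norm_eq_zpow_neg_valuation hx, ← zpow_add₀ (by norm_num : ((2:ℕ):ℝ) ≠ 0)]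
    push_cast
    ring_nf
  rw [hxn, hγn] at hmax
  have := zpow_right_injective₀ (by norm_num : (0:ℝ) < 2) (by norm_num) hmax
  have : γ.valuation = 2 * x.valuation := by omega
  rcases hodd with ⟨k, hk⟩
  omega

/-- For a unit `ε ∈ ℤ₂^×` and `e₂ ≥ 3`, the lattice `⟨ε⟩ ⊥ 2^{e₂}ℍ` (quadratic form
`εx² + 2^{e₂+1}yz`): if `e₂` is odd it represents every element of `2^{e₂+1}ℤ₂` but
no element of `2`-order exactly `e₂`; if `e₂` is even it represents every element of
`2^{e₂}ℤ₂` but no nonzero element of `2`-order exactly `e₂ - 1`. -/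
theorem stmt_15 (ε : ℤ_[2]ˣ) (e₂ : ℕ) (he₂ : 3 ≤ e₂) :
    (Odd e₂ →
      (∀ c : ℤ_[2], ∃ x y z : ℤ_[2],
        (ε : ℤ_[2]) * x ^ 2 + 2 ^ (e₂ + 1) * y * z = 2 ^ (e₂ + 1) * c) ∧
      (∀ γ : ℤ_[2], γ ≠ 0 → γ.valuation = (e₂ : ℤ) → ∀ x y z : ℤ_[2],
        (ε : ℤ_[2]) * x ^ 2 + 2 ^ (e₂ + 1) * y * z ≠ γ)) ∧
    (Even e₂ →
      (∀ c : ℤ_[2], ∃ x y z : ℤ_[2],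
        (ε : ℤ_[2]) * x ^ 2 + 2 ^ (e₂ + 1) * y * z = 2 ^ e₂ * c) ∧
      (∀ γ : ℤ_[2], γ ≠ 0 → γ.valuation = (e₂ : ℤ) - 1 → ∀ x y z : ℤ_[2],
        (ε : ℤ_[2]) * x ^ 2 + 2 ^ (e₂ + 1) * y * z ≠ γ)) := by
  constructor
  · intro hodd
    refine ⟨fun c => ⟨0, c, 1, by ring⟩, fun γ hγ hv x y z => ?_⟩
    apply aux_nonrep ε e₂ γ hγ ?_ ?_ x y z
    · rw [← Int.odd_coe_nat, hv]
      obtain ⟨k, hk⟩ := hodd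
      exact ⟨k, by push_cast [hk]; ring⟩
    · rw [hv]; omega
  · intro heven
    constructor
    · intro c
      obtain ⟨t, w, hw⟩ := aux_rep ε c
      obtain ⟨k, hk⟩ := heven
      refine ⟨2^k * t, w, 1, ?_⟩
      rw [hw]; subst hk; ring
    · intro γ hγ hv x y z
      apply aux_nonrep ε e₂ γ hγ ?_ ?_ x y z
      · rw [← Int.odd_coe_nat, hv]
        obtain ⟨k, hk⟩ := heven
        exact ⟨k - 1, by push_cast [hk]; ring⟩
      · rw [hv]; omega
end

section
/- Let ε₁, ε₂ ∈ ℤ₂^× and e₂ ≥ 0 with 2^{e₂}ε₁ε₂ ∈ 7·(ℚ₂^×)². Then the binary ℤ₂-lattice ⟨ε₁, 2^{e₂}ε₂⟩ represents every element of 2^{e₂+2}ℤ₂. -/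
/-- `-7` has a square root in `ℤ_[2]` (by Hensel's lemma). -/
lemma sqrt_neg_seven' : ∃ z : ℤ_[2], z ^ 2 = -7 := by
  have h2 : ‖(2 : ℤ_[2])‖ = 1 / 2 := by simpa using PadicInt.norm_p (p := 2)
  have hnorm : ‖(Polynomial.X ^ 2 + 7 : Polynomial ℤ_[2]).eval 1‖ <
      ‖(Polynomial.X ^ 2 + 7 : Polynomial ℤ_[2]).derivative.eval 1‖ ^ 2 := by
    have h8 : ((Polynomial.X ^ 2 + 7 : Polynomial ℤ_[2])).eval 1 = 2 ^ 3 := by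
      simp; norm_num
    have hd : ((Polynomial.X ^ 2 + 7 : Polynomial ℤ_[2])).derivative.eval 1 = 2 := by
      simp; norm_num
    rw [h8, hd, norm_pow, h2]
    norm_num
  obtain ⟨z, hz, -⟩ := hensels_lemma hnorm
  refine ⟨z, ?_⟩
  have h : z ^ 2 + 7 = 0 := by simpa using hz
  linear_combination h

/-- Key arithmetic consequence of the hypothesis: `e₂` is even and
`ε₁ε₂ = 7u²` for a unit `u` of `ℤ_[2]`. -/
lemma key_extract' (ε₁ ε₂ : ℤ_[2]ˣ) (e₂ : ℕ) (γ : ℚ_[2]) (hγ0 : γ ≠ 0)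
    (hγ : (2 : ℚ_[2]) ^ e₂ * ((ε₁ : ℤ_[2]) : ℚ_[2]) * ((ε₂ : ℤ_[2]) : ℚ_[2]) = 7 * γ ^ 2) :
    ∃ u : ℤ_[2], ‖u‖ = 1 ∧ (ε₁ : ℤ_[2]) * ε₂ = 7 * u ^ 2 ∧ ∃ k, e₂ = 2 * k := by
  have h2Q : ‖(2 : ℚ_[2])‖ = 1 / 2 := by
    rw [show ((2:ℚ_[2])) = ((2:ℕ):ℚ_[2]) by norm_num, Padic.norm_p]
    norm_num
  have h7 : ‖(7 : ℚ_[2])‖ = 1 := by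
    have hle : ‖((7:ℤ) : ℚ_[2])‖ ≤ 1 := Padic.norm_int_le_one 7
    have hlt : ¬ ‖((7:ℤ) : ℚ_[2])‖ < 1 := by
      rw [Padic.norm_intCast_lt_one_iff]; decide
    push_cast at hle hlt
    linarith [lt_or_eq_of_le hle]
  have he1 : ‖((ε₁ : ℤ_[2]) : ℚ_[2])‖ = 1 := by
    rw [← PadicInt.norm_def]; exact PadicInt.norm_units ε₁
  have he2 : ‖((ε₂ : ℤ_[2]) : ℚ_[2])‖ = 1 := by
    rw [← PadicInt.norm_def]; exact PadicInt.norm_units ε₂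
  have hnormeq : ((1:ℝ) / 2) ^ e₂ = ‖γ‖ ^ 2 := by
    have := congrArg (‖·‖) hγ
    simpa [norm_mul, h2Q, h7, he1, he2] using this
  have hval : ‖γ‖ = (2:ℝ) ^ (-γ.valuation) := by
    simpa using Padic.norm_eq_zpow_neg_valuation hγ0
  have l1 : ((1:ℝ)/2)^e₂ = (2:ℝ)^(-(e₂:ℤ)) := by
    rw [one_div, inv_pow, ← zpow_natCast, ← zpow_neg]
  have l2 : (((2:ℝ)^(-γ.valuation))^2 : ℝ) = (2:ℝ)^(-(2*γ.valuation)) := by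
    rw [← zpow_natCast ((2:ℝ)^(-γ.valuation)) 2, ← zpow_mul]
    congr 1; ring
  have key : (2:ℝ) ^ (-(e₂:ℤ)) = (2:ℝ) ^ (-(2 * γ.valuation)) := by
    rw [← l1, hnormeq, hval, l2]
  have heven : (e₂ : ℤ) = 2 * γ.valuation :=
    neg_injective (zpow_right_injective₀ (by norm_num) (by norm_num) key)
  have hv0 : 0 ≤ γ.valuation := by omega
  obtain ⟨k, hk⟩ : ∃ k : ℕ, γ.valuation = k := ⟨γ.valuation.toNat, (Int.toNat_of_nonneg hv0).symm⟩
  have he₂ : e₂ = 2 * k := by omega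
  set δ : ℚ_[2] := γ / 2 ^ k with hδ
  have h2k : ((2:ℚ_[2]) ^ k) ≠ 0 := pow_ne_zero _ two_ne_zero
  have hδnorm : ‖δ‖ = 1 := by
    rw [hδ, norm_div, hval, hk]
    rw [show ‖(2:ℚ_[2])^k‖ = ((1:ℝ)/2)^k by rw [norm_pow, h2Q]]
    rw [one_div, inv_pow, ← zpow_natCast, ← zpow_neg]
    field_simp
  refine ⟨⟨δ, le_of_eq hδnorm⟩, hδnorm, ?_, k, he₂⟩
  have hγδ : γ = 2 ^ k * δ := by rw [hδ]; field_simp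
  have hQ : ((ε₁ : ℤ_[2]) : ℚ_[2]) * ((ε₂ : ℤ_[2]) : ℚ_[2]) = 7 * δ ^ 2 := by
    have h2e : (2:ℚ_[2])^e₂ = (2^k)^2 := by rw [he₂, pow_mul']
    have := hγ
    rw [hγδ, h2e] at this
    have hc : ((2:ℚ_[2])^k)^2 * (((ε₁ : ℤ_[2]) : ℚ_[2]) * ((ε₂ : ℤ_[2]) : ℚ_[2]))
        = ((2:ℚ_[2])^k)^2 * (7 * δ^2) := by linear_combination this
    exact mul_left_cancel₀ (pow_ne_zero 2 h2k) hc
  apply Subtype.coe_injective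
  push_cast
  exact hQ

/-- If `ε₁, ε₂ ∈ ℤ₂^×` and `2^{e₂}ε₁ε₂ ∈ 7·(ℚ₂^×)²`, then the binary lattice
`⟨ε₁, 2^{e₂}ε₂⟩` represents every element of `2^{e₂+2}ℤ₂`. -/
theorem stmt_16 (ε₁ ε₂ : ℤ_[2]ˣ) (e₂ : ℕ)
    (hsq : ∃ γ : ℚ_[2], γ ≠ 0 ∧
      (2 : ℚ_[2]) ^ e₂ * ((ε₁ : ℤ_[2]) : ℚ_[2]) * ((ε₂ : ℤ_[2]) : ℚ_[2]) = 7 * γ ^ 2) :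
    ∀ c : ℤ_[2], ∃ x y : ℤ_[2],
      (ε₁ : ℤ_[2]) * x ^ 2 + 2 ^ e₂ * (ε₂ : ℤ_[2]) * y ^ 2 = 2 ^ (e₂ + 2) * c := by
  obtain ⟨γ, hγ0, hγ⟩ := hsq
  obtain ⟨u, hu1, huε, k, hk⟩ := key_extract' ε₁ ε₂ e₂ γ hγ0 hγ
  obtain ⟨z, hz⟩ := sqrt_neg_seven'
  -- t := z * u is a unit with t² = -(ε₁ε₂)
  set t : ℤ_[2] := z * u with hts
  have ht2 : t ^ 2 = -((ε₁ : ℤ_[2]) * ε₂) := by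
    rw [hts, mul_pow, hz]
    linear_combination huε
  have htu : IsUnit t := by
    rw [PadicInt.isUnit_iff]
    have h1 : ‖t‖ ^ 2 = 1 := by
      rw [← norm_pow, ht2, norm_neg]
      exact PadicInt.isUnit_iff.mp ((ε₁ * ε₂).isUnit)
    nlinarith [norm_nonneg t]
  set T : ℤ_[2]ˣ := htu.unit with hT
  have hTc : (T : ℤ_[2]) = t := htu.unit_spec
  have hC : ((T : ℤ_[2])) ^ 2 = -((ε₁ : ℤ_[2]) * ε₂) := by rw [hTc]; exact ht2
  have hB : (T : ℤ_[2]) * (T⁻¹ : ℤ_[2]ˣ) = 1 := by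
    rw [← Units.val_mul, mul_inv_cancel, Units.val_one]
  have hA : (ε₁ : ℤ_[2]) * (ε₁⁻¹ : ℤ_[2]ˣ) = 1 := by
    rw [← Units.val_mul, mul_inv_cancel, Units.val_one]
  intro c
  set d : ℤ_[2] := c * (ε₁⁻¹ : ℤ_[2]ˣ) with hd
  have hdc : (ε₁ : ℤ_[2]) * d = c := by rw [hd]; linear_combination c * hA
  refine ⟨2 ^ k * (1 + d), (d - 1) * ε₁ * (T⁻¹ : ℤ_[2]ˣ), ?_⟩
  have hε2 : (ε₂ : ℤ_[2]) * ((ε₁ : ℤ_[2]) * (T⁻¹ : ℤ_[2]ˣ)) ^ 2 = -(ε₁ : ℤ_[2]) := by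
    linear_combination ((ε₁ : ℤ_[2]) * ((T⁻¹ : ℤ_[2]ˣ) : ℤ_[2]) ^ 2) * hC -
      ((ε₁ : ℤ_[2]) * ((T : ℤ_[2]) * (T⁻¹ : ℤ_[2]ˣ) + 1)) * hB
  rw [hk]
  linear_combination ((2 : ℤ_[2]) ^ (2 * k) * (d - 1) ^ 2) * hε2 +
    ((2 : ℤ_[2]) ^ (2 * k) * 4) * hdc
end
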